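/- Let w ∈ F be represented by the reduced tree pair diagram (T_-, T_+), have unique normal form x_{i_1}^{r_1} ⋯ x_{i_n}^{r_n} x_{j_m}^{-s_m} ⋯ x_{j_1}^{-s_1}, and suppose the left subtree of the right child of the root of T_- is nonempty. Then w x_1 has normal form x_{i_1}^{r_1} ⋯ x_{i_n}^{r_n} x_{j_m}^{-s_m} ⋯ x_{j_l}^{-(s_l - 1)} ⋯ x_{j_1}^{-s_1}, where the index j_l is the smallest leaf number occurring in the right subtree of the root of T_-. -/

import Mathlib

/-!
Combinatorial properties of Thompson's group F (Cleary–Taback).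

Common definitions: finite rooted binary trees, leaf exponents, reduced tree
pair diagrams, Fordham's caret types and weights, Thompson's group `F` as the
presented group on `x₀, x₁`, the infinite family of generators `x n`, word
length with respect to `{x₀, x₁}`, and the element of `F` represented by a
tree pair diagram.
-/

noncomputable section

namespace Thompson

/-- Finite rooted binary trees; a `node` is a caret. -/
inductive BinTree : Type
  | leaf : BinTree
  | node : BinTree → BinTree → BinTree
  deriving DecidableEq

namespace BinTree

/-- Number of carets (internal nodes). -/
def numCarets : BinTree → ℕ
  | .leaf => 0
  | .node l r => numCarets l + numCarets r + 1

/-- Number of exposed leaves. -/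
def numLeaves : BinTree → ℕ
  | .leaf => 1
  | .node l r => numLeaves l + numLeaves r

/-- The left subtree of the root (a leaf if the tree is a leaf). -/
def leftSubtree : BinTree → BinTree
  | .leaf => .leaf
  | .node l _ => l

/-- The right subtree of the root (a leaf if the tree is a leaf). -/
def rightSubtree : BinTree → BinTree
  | .leaf => .leaf
  | .node _ r => r

/-- Helper for `exps`: leaf exponents of a subtree hanging by a left edge,
where maximal left-edge paths may also use the edge from this subtree's root
to its parent. -/
def expsAux : BinTree → List ℕ
  | .leaf => [0]
  | .node l r =>
      (match expsAux l with
        | [] => []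
        | a :: as => (a + 1) :: as) ++ expsAux r

/-- The list of leaf exponents `E(0), …, E(m)`: `E(k)` is the length of the
maximal path of left edges from leaf `k` that does not reach the right side
of the tree. -/
def exps : BinTree → List ℕ
  | .leaf => [0]
  | .node l r => expsAux l ++ exps r

/-- The indices `m` such that the exposed leaves numbered `m` and `m+1` are
the two leaves of a single caret. -/
def exposedCaretPairs : BinTree → List ℕ
  | .leaf => []
  | .node .leaf .leaf => [0]
  | .node l r => exposedCaretPairs l ++ (exposedCaretPairs r).map (· + numLeaves l)

/-- The smallest leaf number occurring in the right subtree of the root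
(leaves are numbered from `0` left to right, so this is the number of leaves
of the left subtree of the root). -/
def minRightLeaf (T : BinTree) : ℕ := T.leftSubtree.numLeaves

/-- A tree all of whose non-root carets are right carets. -/
def IsRightVine : BinTree → Prop
  | .leaf => True
  | .node l r => l = .leaf ∧ IsRightVine r

end BinTree

open BinTree

/-- `(T₋, T₊)` is a reduced tree pair diagram: the two trees have the same
number of carets and there is no index `m` such that in both trees the
exposed leaves numbered `m` and `m+1` are the two leaves of a single caret. -/
def IsReducedPair (Tm Tp : BinTree) : Prop :=
  Tm.numCarets = Tp.numCarets ∧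
    ∀ m : ℕ, ¬(m ∈ exposedCaretPairs Tm ∧ m ∈ exposedCaretPairs Tp)

/-- Position of a caret: on the left side of the tree (the root counts as a
left caret), on the right side, or interior. -/
inductive CaretPos : Type
  | left | right | interior
  deriving DecidableEq

/-- Infix-ordered list of `(position, has right child)` for the carets of a
subtree all of whose carets are interior. -/
def interiorInfo : BinTree → List (CaretPos × Bool)
  | .leaf => []
  | .node l r =>
      interiorInfo l ++ (CaretPos.interior, decide (r ≠ BinTree.leaf)) :: interiorInfo r

/-- Infix information for a subtree hanging on the left side of the tree. -/
def leftInfo : BinTree → List (CaretPos × Bool)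
  | .leaf => []
  | .node l r =>
      leftInfo l ++ (CaretPos.left, decide (r ≠ BinTree.leaf)) :: interiorInfo r

/-- Infix information for a subtree hanging on the right side of the tree. -/
def rightInfo : BinTree → List (CaretPos × Bool)
  | .leaf => []
  | .node l r =>
      interiorInfo l ++ (CaretPos.right, decide (r ≠ BinTree.leaf)) :: rightInfo r

/-- Infix-ordered list of `(position, has right child)` over all carets of a
tree; the root counts as a left caret. -/
def infoList : BinTree → List (CaretPos × Bool)
  | .leaf => []
  | .node l r =>
      leftInfo l ++ (CaretPos.left, decide (r ≠ BinTree.leaf)) :: rightInfo r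

/-- The number of left carets of a tree (the root counts as a left caret). -/
def numLeftCarets (T : BinTree) : ℕ := ((infoList T).map Prod.fst).count CaretPos.left

/-- The number of interior carets of a tree. -/
def numInteriorCarets (T : BinTree) : ℕ :=
  ((infoList T).map Prod.fst).count CaretPos.interior

/-- The number of right carets of a tree. -/
def numRightCarets (T : BinTree) : ℕ := ((infoList T).map Prod.fst).count CaretPos.right

/-- Fordham's seven caret types. -/
inductive CaretType : Type
  | L0 | LL | I0 | IR | RI | RNI | R0
  deriving DecidableEq

/-- The type of the caret numbered `i` (infix order), given the infix
information list of the tree. -/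
def typeOf (l : List (CaretPos × Bool)) (i : ℕ) : CaretType :=
  if i = 0 then CaretType.L0
  else
    match l[i]? with
    | some (CaretPos.left, _) => CaretType.LL
    | some (CaretPos.interior, b) => if b then CaretType.IR else CaretType.I0
    | some (CaretPos.right, _) =>
        match l[i + 1]? with
        | some (CaretPos.interior, _) => CaretType.RI
        | _ =>
            if (l.drop (i + 1)).any (fun p => p.1 == CaretPos.interior) then CaretType.RNI
            else CaretType.R0
    | none => CaretType.R0

/-- The type of the caret numbered `i` (infix order) in the tree `T`. -/
def caretTypeAt (T : BinTree) (i : ℕ) : CaretType := typeOf (infoList T) i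

/-- The infix-ordered list of caret types of a tree. -/
def caretTypes (T : BinTree) : List CaretType :=
  (List.range T.numCarets).map (caretTypeAt T)

/-- Fordham's weight of a pair of caret types: the pair `(L₀, L₀)` has weight
`0`, and all other weights are given by Fordham's table. -/
def weight : CaretType → CaretType → ℕ
  | .L0, _ => 0
  | _, .L0 => 0
  | .R0, .R0 => 0 | .R0, .RNI => 2 | .R0, .RI => 2 | .R0, .LL => 1 | .R0, .I0 => 1
  | .R0, .IR => 3
  | .RNI, .R0 => 2 | .RNI, .RNI => 2 | .RNI, .RI => 2 | .RNI, .LL => 1 | .RNI, .I0 => 1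
  | .RNI, .IR => 3
  | .RI, .R0 => 2 | .RI, .RNI => 2 | .RI, .RI => 2 | .RI, .LL => 1 | .RI, .I0 => 3
  | .RI, .IR => 3
  | .LL, .R0 => 1 | .LL, .RNI => 1 | .LL, .RI => 1 | .LL, .LL => 2 | .LL, .I0 => 2
  | .LL, .IR => 2
  | .I0, .R0 => 1 | .I0, .RNI => 1 | .I0, .RI => 3 | .I0, .LL => 2 | .I0, .I0 => 2
  | .I0, .IR => 4
  | .IR, .R0 => 3 | .IR, .RNI => 3 | .IR, .RI => 3 | .IR, .LL => 2 | .IR, .I0 => 4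
  | .IR, .IR => 4

open scoped commutatorElement

/-- The defining relators of Thompson's group `F` in the finite presentation
`⟨x₀, x₁ ∣ [x₀x₁⁻¹, x₀⁻¹x₁x₀], [x₀x₁⁻¹, x₀⁻²x₁x₀²]⟩`. -/
def thompsonRels : Set (FreeGroup (Fin 2)) :=
  {⁅FreeGroup.of (0 : Fin 2) * (FreeGroup.of (1 : Fin 2))⁻¹,
      (FreeGroup.of (0 : Fin 2))⁻¹ * FreeGroup.of (1 : Fin 2) * FreeGroup.of (0 : Fin 2)⁆,
    ⁅FreeGroup.of (0 : Fin 2) * (FreeGroup.of (1 : Fin 2))⁻¹,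
      (FreeGroup.of (0 : Fin 2))⁻¹ * (FreeGroup.of (0 : Fin 2))⁻¹ * FreeGroup.of (1 : Fin 2) * FreeGroup.of (0 : Fin 2) *
        FreeGroup.of (0 : Fin 2)⁆}

/-- Thompson's group `F`. -/
abbrev F : Type := PresentedGroup thompsonRels

/-- The generator `x₀` of `F`. -/
def x0 : F := PresentedGroup.of (0 : Fin 2)

/-- The generator `x₁` of `F`. -/
def x1 : F := PresentedGroup.of (1 : Fin 2)

/-- The generators `x_n` of the infinite presentation:
`x_n = x₀^{-(n-1)} x₁ x₀^{n-1}` for `n ≥ 1`. -/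
def x : ℕ → F
  | 0 => x0
  | n + 1 => (x0 ^ n)⁻¹ * x1 * x0 ^ n

/-- The symmetrized generating set `{x₀^{±1}, x₁^{±1}}` of `F`. -/
def genSet : Set F := {x0, x0⁻¹, x1, x1⁻¹}

/-- The word length of `w ∈ F` with respect to the generating set `{x₀, x₁}`:
the least `n` such that `w` is a product of `n` elements of
`{x₀^{±1}, x₁^{±1}}`. -/
def wordLength (w : F) : ℕ :=
  sInf {n | ∃ l : List F, l.length = n ∧ (∀ g ∈ l, g ∈ genSet) ∧ l.prod = w}

/-- The positive element `x₀^{E(0)} x₁^{E(1)} ⋯ x_m^{E(m)}` of `F` built from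
the leaf exponents of a tree. -/
def posElt (T : BinTree) : F := ((T.exps).zipIdx.map fun p => x p.2 ^ p.1).prod

/-- The element of `F` represented by the tree pair diagram `(T₋, T₊)`:
the positive part comes from the leaf exponents of `T₊` and the negative part
from those of `T₋`. -/
def toF (Tm Tp : BinTree) : F := posElt Tp * (posElt Tm)⁻¹

/-- `x_{i₁}^{r₁} ⋯ x_{i_k}^{r_k}` for a list of indices and exponents. -/
def prodX (idx exps : List ℕ) : F := (List.zipWith (fun i r => x i ^ r) idx exps).prod

/-- The element `x₀^{r₀} x_{i₁}^{r₁} ⋯ x_{i_k}^{r_k} x_{j_l}^{-s_l} ⋯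
x_{j₁}^{-s₁} x₀^{-s₀}` of `F` (normal form with the `x₀`-exponents
separated). -/
def nfElt0 (r0 : ℕ) (is rs js ss : List ℕ) (s0 : ℕ) : F :=
  x0 ^ r0 * prodX is rs * (x0 ^ s0 * prodX js ss)⁻¹

/-- Normal form data `x_{i₁}^{r₁} ⋯ x_{i_k}^{r_k} x_{j_l}^{-s_l} ⋯ x_{j₁}^{-s₁}`:
positive exponents, strictly increasing indices, and the uniqueness condition
that whenever both `x_i` and `x_i⁻¹` occur so does `x_{i+1}` or `x_{i+1}⁻¹`. -/
def IsNF (is rs js ss : List ℕ) : Prop :=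
  is.length = rs.length ∧ js.length = ss.length ∧
    is.Chain' (· < ·) ∧ js.Chain' (· < ·) ∧
    (∀ r ∈ rs, 0 < r) ∧ (∀ s ∈ ss, 0 < s) ∧
    (∀ i : ℕ, i ∈ is → i ∈ js → (i + 1 ∈ is ∨ i + 1 ∈ js))

/-- Normal form data with the `x₀`-exponents separated (without the
uniqueness condition): positive exponents and strictly increasing positive
indices. -/
def IsWeakNF0 (_r0 : ℕ) (is rs js ss : List ℕ) (_s0 : ℕ) : Prop :=
  is.length = rs.length ∧ js.length = ss.length ∧
    is.Chain' (· < ·) ∧ js.Chain' (· < ·) ∧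
    (∀ i ∈ is, 0 < i) ∧ (∀ j ∈ js, 0 < j) ∧
    (∀ r ∈ rs, 0 < r) ∧ (∀ s ∈ ss, 0 < s)

/-- Unique normal form data with the `x₀`-exponents separated: additionally,
whenever both `x_i` and `x_i⁻¹` occur, so does `x_{i+1}` or `x_{i+1}⁻¹`. -/
def IsNF0 (r0 : ℕ) (is rs js ss : List ℕ) (s0 : ℕ) : Prop :=
  IsWeakNF0 r0 is rs js ss s0 ∧
    (0 < r0 → 0 < s0 → (1 ∈ is ∨ 1 ∈ js)) ∧
    (∀ i : ℕ, i ∈ is → i ∈ js → (i + 1 ∈ is ∨ i + 1 ∈ js))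

/-- `w` is strictly positive: its normal form consists entirely of generators
with positive exponents. -/
def IsStrictlyPositive (w : F) : Prop :=
  ∃ is rs : List ℕ, is.length = rs.length ∧ is.Chain' (· < ·) ∧
    (∀ r ∈ rs, 0 < r) ∧ w = prodX is rs

/-- `w` is a dead end element: every generator decreases its word length. -/
def IsDeadEnd (w : F) : Prop :=
  ∀ α ∈ genSet, wordLength (w * α) + 1 = wordLength w

/-- The leaf-exponent function determined by the negative part
`x_{j_l}^{-s_l} ⋯ x_{j₁}^{-s₁} x₀^{-s₀}` of a normal form. -/
def nfExp (s0 : ℕ) (js ss : List ℕ) (k : ℕ) : ℕ :=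
  if k = 0 then s0 else (((js.zip ss).filter fun p => p.1 == k).map Prod.snd).sum

/-- The tree `T` realizes the leaf-exponent function `e`: its leaf exponents
agree with `e`, and `e` vanishes beyond the leaves of `T`. -/
def RealizesExps (T : BinTree) (e : ℕ → ℕ) : Prop :=
  ∀ k : ℕ, ((BinTree.exps T)[k]?).getD 0 = e k

/-- The weights, per caret type, of the nested traversal method. -/
def omegaWeight : CaretType → ℕ
  | .L0 => 0 | .R0 => 0 | .LL => 1 | .I0 => 1 | .RNI => 2 | .RI => 2 | .IR => 3


namespace NFU

theorem _root_.Equiv.Perm.inv_apply_self {α : Type*} (f : Equiv.Perm α) (x : α) :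
    f⁻¹ (f x) = x := f.symm_apply_apply x

theorem _root_.Equiv.Perm.apply_inv_self {α : Type*} (f : Equiv.Perm α) (x : α) :
    f (f⁻¹ x) = x := f.apply_symm_apply x

def _root_.List.enumFrom {α : Type*} : ℕ → List α → List (ℕ × α)
  | _, [] => []
  | n, a :: l => (n, a) :: List.enumFrom (n + 1) l

def _root_.List.enum {α : Type*} (l : List α) : List (ℕ × α) := List.enumFrom 0 l

theorem _root_.List.enumFrom_cons {α : Type*} (n : ℕ) (a : α) (l : List α) :
    List.enumFrom n (a :: l) = (n, a) :: List.enumFrom (n + 1) l := rfl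

theorem _root_.List.le_fst_of_mem_enumFrom {α : Type*} {x : ℕ × α} {n : ℕ} {l : List α}
    (h : x ∈ List.enumFrom n l) : n ≤ x.1 := by
  induction l generalizing n with
  | nil => simp [List.enumFrom] at h
  | cons a l ih =>
    rw [List.enumFrom_cons, List.mem_cons] at h
    rcases h with rfl | h
    · exact le_refl _
    · have := ih h; omega

theorem _root_.List.enumFrom_append {α : Type*} (n : ℕ) (xs ys : List α) :
    List.enumFrom n (xs ++ ys) = List.enumFrom n xs ++ List.enumFrom (n + xs.length) ys := by
  induction xs generalizing n with
  | nil => simp [List.enumFrom]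
  | cons a xs ih =>
    rw [List.cons_append, List.enumFrom_cons, List.enumFrom_cons, ih]
    simp only [List.cons_append, List.length_cons]
    rw [show n + (xs.length + 1) = n + 1 + xs.length by omega]

theorem enumFrom_mem_aux {α : Type*} {x : α} (l : List α) :
    ∀ n i, (i + n, x) ∈ List.enumFrom n l ↔ l[i]? = some x := by
  induction l with
  | nil => intro n i; simp [List.enumFrom]
  | cons a l ih =>
    intro n i
    rw [List.enumFrom_cons, List.mem_cons]
    cases i with
    | zero =>
      constructor
      · rintro (h | h)
        · simp [show x = a from congrArg Prod.snd h]
        · have := List.le_fst_of_mem_enumFrom h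
          simp at this
      · intro h
        left
        simp at h
        subst h
        simp
    | succ i =>
      have := ih (n + 1) i
      rw [show i + (n + 1) = i + 1 + n by omega] at this
      rw [List.getElem?_cons_succ, ← this]
      constructor
      · rintro (h | h)
        · exact absurd (show i + 1 + n = n from congrArg Prod.fst h) (by omega)
        · exact h
      · intro h; exact Or.inr h

theorem _root_.List.mk_mem_enum_iff_getElem? {α : Type*} {i : ℕ} {x : α} {l : List α} :
    (i, x) ∈ List.enum l ↔ l[i]? = some x := by
  have := enumFrom_mem_aux (x := x) l 0 i
  simpa [List.enum] using this

theorem enumFrom_eq_zipIdx {α : Type*} (l : List α) :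
    ∀ n, List.enumFrom n l = (l.zipIdx n).map Prod.swap := by
  induction l with
  | nil => intro n; rfl
  | cons a l ih => intro n; rw [List.enumFrom_cons, ih]; rfl

abbrev S := Stream' Bool

lemma exists_cons (s : S) : ∃ a t, s = Stream'.cons a t :=
  ⟨s.head, s.tail, (Stream'.eta s).symm⟩

lemma cons_inj {a b : Bool} {s t : S} (h : Stream'.cons a s = Stream'.cons b t) :
    a = b ∧ s = t := by
  constructor
  · have := congrArg Stream'.head h; simpa using this
  · have := congrArg Stream'.tail h; simpa using this

/-- the image of `x₀`: `0x ↦ 00x`, `10y ↦ 01y`, `11y ↦ 1y`. -/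
def sigF : S → S := fun s =>
  if s.head then
    (if s.tail.head then s.tail else Stream'.cons false (Stream'.cons true s.tail.tail))
  else Stream'.cons false (Stream'.cons false s.tail)

def sigG : S → S := fun s =>
  if s.head then Stream'.cons true s
  else (if s.tail.head then Stream'.cons true (Stream'.cons false s.tail.tail) else s.tail)

def sig : Equiv.Perm S where
  toFun := sigF
  invFun := sigG
  left_inv := by
    intro s
    obtain ⟨a, s, rfl⟩ := exists_cons s
    obtain ⟨b, s, rfl⟩ := exists_cons s
    cases a <;> cases b <;> simp [sigF, sigG]
  right_inv := by
    intro s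
    obtain ⟨a, s, rfl⟩ := exists_cons s
    obtain ⟨b, s, rfl⟩ := exists_cons s
    cases a <;> cases b <;> simp [sigF, sigG]

@[simp] lemma sig_ff (s : S) :
    sig (Stream'.cons false s) = Stream'.cons false (Stream'.cons false s) := by
  simp [sig, sigF]

@[simp] lemma sig_10 (s : S) :
    sig (Stream'.cons true (Stream'.cons false s))
      = Stream'.cons false (Stream'.cons true s) := by
  simp [sig, sigF]

@[simp] lemma sig_11 (s : S) :
    sig (Stream'.cons true (Stream'.cons true s)) = Stream'.cons true s := by
  simp [sig, sigF]

@[simp] lemma sig_inv_0 (s : S) :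
    sig⁻¹ (Stream'.cons false (Stream'.cons false s)) = Stream'.cons false s := by
  show sig.symm _ = _
  simp [sig, sigG]

@[simp] lemma sig_inv_01 (s : S) :
    sig⁻¹ (Stream'.cons false (Stream'.cons true s))
      = Stream'.cons true (Stream'.cons false s) := by
  show sig.symm _ = _
  simp [sig, sigG]

@[simp] lemma sig_inv_1 (s : S) :
    sig⁻¹ (Stream'.cons true s) = Stream'.cons true (Stream'.cons true s) := by
  show sig.symm _ = _
  simp [sig, sigG]

def relF (π : Equiv.Perm S) : S → S := fun s =>
  if s.head then Stream'.cons true (π s.tail) else s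

/-- relativization of a permutation to the right subtree -/
def rel (π : Equiv.Perm S) : Equiv.Perm S where
  toFun := relF π
  invFun := relF π⁻¹
  left_inv := by
    intro s
    obtain ⟨a, s, rfl⟩ := exists_cons s
    cases a <;> simp [relF]
  right_inv := by
    intro s
    obtain ⟨a, s, rfl⟩ := exists_cons s
    cases a <;> simp [relF]

@[simp] lemma rel_t (π : Equiv.Perm S) (s : S) :
    rel π (Stream'.cons true s) = Stream'.cons true (π s) := by
  simp [rel, relF]

@[simp] lemma rel_f (π : Equiv.Perm S) (s : S) :
    rel π (Stream'.cons false s) = Stream'.cons false s := by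
  simp [rel, relF]

@[simp] lemma rel_inv (π : Equiv.Perm S) : (rel π)⁻¹ = rel π⁻¹ := by
  apply Equiv.ext
  intro s
  obtain ⟨a, s, rfl⟩ := exists_cons s
  show (rel π).symm _ = rel π⁻¹ _
  cases a <;> simp [rel, relF]

def famE : ℕ → Equiv.Perm S
  | 0 => sig
  | n + 1 => rel (famE n)

@[simp] lemma famE_zero : famE 0 = sig := rfl

@[simp] lemma famE_succ_t (n : ℕ) (s : S) :
    famE (n + 1) (Stream'.cons true s) = Stream'.cons true (famE n s) := by
  show rel (famE n) _ = _
  simp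

@[simp] lemma famE_succ_f (n : ℕ) (s : S) :
    famE (n + 1) (Stream'.cons false s) = Stream'.cons false s := by
  show rel (famE n) _ = _
  simp

@[simp] lemma famE_succ_inv_t (n : ℕ) (s : S) :
    (famE (n + 1))⁻¹ (Stream'.cons true s) = Stream'.cons true ((famE n)⁻¹ s) := by
  show (rel (famE n))⁻¹ _ = _
  simp

@[simp] lemma famE_succ_inv_f (n : ℕ) (s : S) :
    (famE (n + 1))⁻¹ (Stream'.cons false s) = Stream'.cons false s := by
  show (rel (famE n))⁻¹ _ = _
  simp

/-- key conjugation identity -/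
lemma conj_famE {n : ℕ} (hn : 1 ≤ n) : sig⁻¹ * famE n * sig = famE (n + 1) := by
  cases n with
  | zero => omega
  | succ m =>
    apply Equiv.ext
    intro s
    obtain ⟨a, s, rfl⟩ := exists_cons s
    obtain ⟨b, s, rfl⟩ := exists_cons s
    cases a <;> cases b <;> simp [Equiv.Perm.mul_apply]

lemma conj_famE1 {n : ℕ} (hn : 2 ≤ n) :
    (famE 1)⁻¹ * famE n * famE 1 = famE (n + 1) := by
  obtain ⟨m, rfl⟩ : ∃ m, n = m + 2 := ⟨n - 2, by omega⟩
  apply Equiv.ext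
  intro s
  obtain ⟨a, s, rfl⟩ := exists_cons s
  cases a
  · simp [Equiv.Perm.mul_apply]
  · have h := conj_famE (n := m + 1) (by omega)
    have h' := congrArg (fun π : Equiv.Perm S => π s) h
    simp only [Equiv.Perm.mul_apply] at h'
    simp [Equiv.Perm.mul_apply]
    exact congrArg (Stream'.cons true) h'

section Phi

lemma comm_helper {G : Type*} [Group G] {A B C D : G} (h1 : A⁻¹ * C * A = D)
    (h2 : B⁻¹ * C * B = D) : ⁅A * B⁻¹, C⁆ = 1 := by
  rw [commutatorElement_eq_one_iff_commute]
  have e1 : A * D * A⁻¹ = C := by rw [← h1]; group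
  have e2 : B * D * B⁻¹ = C := by rw [← h2]; group
  show A * B⁻¹ * C = C * (A * B⁻¹)
  calc A * B⁻¹ * C = A * B⁻¹ * (B * D * B⁻¹) := by rw [e2]
    _ = (A * D * A⁻¹) * (A * B⁻¹) := by group
    _ = C * (A * B⁻¹) := by rw [e1]

def fgen : Fin 2 → Equiv.Perm S := ![sig, famE 1]

lemma lift_rels : ∀ r ∈ thompsonRels, FreeGroup.lift fgen r = 1 := by
  have hA : fgen 0 = sig := rfl
  have hB : fgen 1 = famE 1 := rfl
  intro r hr
  simp only [thompsonRels, Set.mem_insert_iff, Set.mem_singleton_iff] at hr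
  rcases hr with rfl | rfl
  · rw [map_commutatorElement]
    simp only [map_mul, map_inv, FreeGroup.lift_apply_of, hA, hB]
    rw [conj_famE (le_refl 1)]
    exact comm_helper (conj_famE (by norm_num : 1 ≤ 2)) (conj_famE1 (le_refl 2))
  · rw [map_commutatorElement]
    simp only [map_mul, map_inv, FreeGroup.lift_apply_of, hA, hB]
    have h : sig⁻¹ * sig⁻¹ * famE 1 * sig * sig
        = sig⁻¹ * (sig⁻¹ * famE 1 * sig) * sig := by group
    rw [h, conj_famE (le_refl 1), conj_famE (by norm_num : 1 ≤ 2)]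
    exact comm_helper (conj_famE (by norm_num : 1 ≤ 3)) (conj_famE1 (by norm_num : 2 ≤ 3))

/-- The action of `F` on the Cantor set of binary streams. -/
def phi : F →* Equiv.Perm S := PresentedGroup.toGroup lift_rels

lemma phi_x0 : phi x0 = sig := by
  show phi (PresentedGroup.of 0) = sig
  rw [phi, PresentedGroup.toGroup.of]
  rfl

lemma phi_x1 : phi x1 = famE 1 := by
  show phi (PresentedGroup.of 1) = famE 1
  rw [phi, PresentedGroup.toGroup.of]
  rfl

lemma sig_conj_pow (n : ℕ) : (sig ^ n)⁻¹ * famE 1 * sig ^ n = famE (n + 1) := by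
  induction n with
  | zero => simp
  | succ m ih =>
    have h : (sig ^ (m+1))⁻¹ * famE 1 * sig ^ (m+1)
        = sig⁻¹ * ((sig ^ m)⁻¹ * famE 1 * sig ^ m) * sig := by
      rw [pow_succ]; group
    rw [h, ih, conj_famE (by omega)]

lemma phi_x : ∀ n, phi (x n) = famE n
  | 0 => phi_x0
  | n + 1 => by
    show phi ((x0 ^ n)⁻¹ * x1 * x0 ^ n) = _
    rw [map_mul, map_mul, map_inv, map_pow, phi_x0, phi_x1, sig_conj_pow]

end Phi

section StreamCombinators

/-- `1^m ++ t` -/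
def ap : ℕ → S → S
  | 0, t => t
  | m + 1, t => Stream'.cons true (ap m t)

/-- `0^a 1 t` -/
def zs : ℕ → S → S
  | 0, t => Stream'.cons true t
  | a + 1, t => Stream'.cons false (zs a t)

lemma ap_inj : ∀ {m : ℕ} {x y : S}, ap m x = ap m y → x = y
  | 0, x, y, h => h
  | m + 1, x, y, h => ap_inj (cons_inj h).2

lemma zs_inj : ∀ {a b : ℕ} {x y : S}, zs a x = zs b y → a = b ∧ x = y
  | 0, 0, x, y, h => ⟨rfl, (cons_inj h).2⟩
  | 0, b + 1, x, y, h => by simpa using (cons_inj h).1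
  | a + 1, 0, x, y, h => by simpa using (cons_inj h).1
  | a + 1, b + 1, x, y, h => by
    obtain ⟨h1, h2⟩ := zs_inj (cons_inj h).2
    exact ⟨by omega, h2⟩

lemma famE_ap (m k : ℕ) (x : S) : famE (m + k) (ap m x) = ap m (famE k x) := by
  induction m with
  | zero => rw [Nat.zero_add]; rfl
  | succ n ih =>
    have : n + 1 + k = (n + k) + 1 := by omega
    rw [this]
    show famE ((n+k)+1) (Stream'.cons true (ap n x)) = Stream'.cons true (ap n (famE k x))
    rw [famE_succ_t, ih]

lemma famE_fixes : ∀ {k n : ℕ}, k < n → ∀ (t : S),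
    famE n (ap k (Stream'.cons false t)) = ap k (Stream'.cons false t)
  | 0, n + 1, _, t => by
    show famE (n+1) (Stream'.cons false t) = _
    rw [famE_succ_f]
    rfl
  | k + 1, n + 1, h, t => by
    show famE (n+1) (Stream'.cons true (ap k (Stream'.cons false t))) = _
    rw [famE_succ_t, famE_fixes (by omega) t]
    rfl

/-- `π` fixes every stream having a `false` among its first `m` entries. -/
def FixBelow (m : ℕ) (π : Equiv.Perm S) : Prop :=
  ∀ k, k < m → ∀ t, π (ap k (Stream'.cons false t)) = ap k (Stream'.cons false t)

lemma FixBelow.one (m : ℕ) : FixBelow m 1 := fun _ _ _ => rfl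

lemma FixBelow.mul {m : ℕ} {π ρ : Equiv.Perm S} (h1 : FixBelow m π) (h2 : FixBelow m ρ) :
    FixBelow m (π * ρ) := fun k hk t => by
  rw [Equiv.Perm.mul_apply, h2 k hk t, h1 k hk t]

lemma FixBelow.inv {m : ℕ} {π : Equiv.Perm S} (h : FixBelow m π) : FixBelow m π⁻¹ :=
  fun k hk t => by
    conv_lhs => rw [← h k hk t]
    rw [Equiv.Perm.inv_apply_self]

lemma FixBelow.pow {m : ℕ} {π : Equiv.Perm S} (h : FixBelow m π) (n : ℕ) :
    FixBelow m (π ^ n) := by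
  induction n with
  | zero => exact FixBelow.one m
  | succ k ih => rw [pow_succ]; exact ih.mul h

lemma FixBelow.famE {m n : ℕ} (h : m ≤ n) : FixBelow m (famE n) :=
  fun k hk t => famE_fixes (by omega) t

/-- `π` acts on the `1^m`-cylinder as `π₀` acts on tails. -/
def RelAt (m : ℕ) (π π₀ : Equiv.Perm S) : Prop :=
  ∀ x, π (ap m x) = ap m (π₀ x)

lemma RelAt.one (m : ℕ) : RelAt m 1 1 := fun _ => rfl

lemma RelAt.mul {m : ℕ} {π ρ π₀ ρ₀ : Equiv.Perm S} (h1 : RelAt m π π₀) (h2 : RelAt m ρ ρ₀) :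
    RelAt m (π * ρ) (π₀ * ρ₀) := fun x => by
  rw [Equiv.Perm.mul_apply, Equiv.Perm.mul_apply, h2 x, h1 (ρ₀ x)]

lemma RelAt.inv {m : ℕ} {π π₀ : Equiv.Perm S} (h : RelAt m π π₀) : RelAt m π⁻¹ π₀⁻¹ :=
  fun x => by
    conv_lhs => rw [← Equiv.Perm.apply_inv_self π₀ x, ← h (π₀⁻¹ x)]
    rw [Equiv.Perm.inv_apply_self]

lemma RelAt.pow {m : ℕ} {π π₀ : Equiv.Perm S} (h : RelAt m π π₀) (n : ℕ) :
    RelAt m (π ^ n) (π₀ ^ n) := by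
  induction n with
  | zero => exact RelAt.one m
  | succ k ih =>
    rw [pow_succ, pow_succ]; exact ih.mul h

lemma RelAt.famE (m k : ℕ) : RelAt m (famE (m + k)) (famE k) := fun x => famE_ap m k x

end StreamCombinators

section SigPow

lemma sig_zs {a : ℕ} (h : 1 ≤ a) (t : S) : sig (zs a t) = zs (a + 1) t := by
  cases a with
  | zero => omega
  | succ a =>
    show sig (Stream'.cons false (zs a t)) = Stream'.cons false (Stream'.cons false (zs a t))
    rw [sig_ff]

lemma sig_pow_zs (k : ℕ) : ∀ a t, 1 ≤ a → (sig ^ k) (zs a t) = zs (a + k) t := by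
  induction k with
  | zero => intro a t _; rfl
  | succ k ih =>
    intro a t ha
    rw [pow_succ, Equiv.Perm.mul_apply, sig_zs ha, ih (a+1) t (by omega)]
    have h2 : a + 1 + k = a + (k + 1) := by omega
    rw [h2]

lemma sig_ap_one (t : S) : sig (ap 1 (Stream'.cons false t)) = zs 1 t := by
  show sig (Stream'.cons true (Stream'.cons false t))
      = Stream'.cons false (Stream'.cons true t)
  rw [sig_10]

lemma sig_ap_step {j : ℕ} (h : 1 ≤ j) (t : S) :
    sig (ap (j + 1) (Stream'.cons false t)) = ap j (Stream'.cons false t) := by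
  cases j with
  | zero => omega
  | succ j =>
    show sig (Stream'.cons true (Stream'.cons true (ap j (Stream'.cons false t)))) = _
    rw [sig_11]
    rfl

lemma sig_pow_os_small : ∀ k {j : ℕ} (t : S), k < j →
    (sig ^ k) (ap j (Stream'.cons false t)) = ap (j - k) (Stream'.cons false t) := by
  intro k
  induction k with
  | zero => intro j t _; simp
  | succ k ih =>
    intro j t h
    obtain ⟨j', rfl⟩ : ∃ j', j = j' + 1 := ⟨j - 1, by omega⟩
    rw [pow_succ, Equiv.Perm.mul_apply, sig_ap_step (by omega) t, ih t (by omega)]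
    have h2 : j' - k = j' + 1 - (k + 1) := by omega
    rw [h2]

lemma sig_pow_os_eq : ∀ {j : ℕ} (t : S), 1 ≤ j →
    (sig ^ j) (ap j (Stream'.cons false t)) = zs 1 t := by
  intro j
  induction j with
  | zero => intro t h; omega
  | succ j ih =>
    intro t _
    cases Nat.eq_zero_or_pos j with
    | inl h0 =>
      subst h0
      rw [pow_one, sig_ap_one]
    | inr h1 =>
      rw [pow_succ, Equiv.Perm.mul_apply, sig_ap_step h1 t, ih t h1]

lemma sig_pow_os_big {k j : ℕ} (t : S) (h1 : 1 ≤ j) (h2 : j ≤ k) :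
    (sig ^ k) (ap j (Stream'.cons false t)) = zs (k - j + 1) t := by
  obtain ⟨k', rfl⟩ : ∃ k', k = j + k' := ⟨k - j, by omega⟩
  rw [add_comm j k', pow_add, Equiv.Perm.mul_apply, sig_pow_os_eq t h1,
    sig_pow_zs k' 1 t (le_refl 1)]
  have h3 : k' + j - j + 1 = 1 + k' := by omega
  rw [h3]

end SigPow

section FRelations

lemma x_zero : x 0 = x0 := rfl

lemma x_one : x 1 = x1 := by
  show (x0 ^ 0)⁻¹ * x1 * x0 ^ 0 = x1
  simp

lemma rel_eq_one {r : FreeGroup (Fin 2)} (h : r ∈ thompsonRels) :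
    PresentedGroup.mk thompsonRels r = 1 := by
  exact (QuotientGroup.eq_one_iff r).mpr (Subgroup.subset_normalClosure h)

lemma comm_helper2 {G : Type*} [Group G] {A B C : G} (h : ⁅A * B⁻¹, C⁆ = 1) :
    B⁻¹ * C * B = A⁻¹ * C * A := by
  have h' : A * B⁻¹ * C = C * (A * B⁻¹) := commutatorElement_eq_one_iff_commute.mp h
  have e : B⁻¹ * C = A⁻¹ * (C * (A * B⁻¹)) := by rw [← h']; group
  calc B⁻¹ * C * B = (B⁻¹ * C) * B := rfl
    _ = (A⁻¹ * (C * (A * B⁻¹))) * B := by rw [e]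
    _ = A⁻¹ * C * A := by group

lemma free_rel_one : (⁅x0 * x1⁻¹, x0⁻¹ * x1 * x0⁆ : F) = 1 := by
  have h := rel_eq_one (r := ⁅FreeGroup.of (0 : Fin 2) * (FreeGroup.of (1 : Fin 2))⁻¹,
      (FreeGroup.of (0 : Fin 2))⁻¹ * FreeGroup.of (1 : Fin 2) * FreeGroup.of (0 : Fin 2)⁆)
    (by simp [thompsonRels])
  rw [map_commutatorElement] at h
  simp only [map_mul, map_inv] at h
  exact h

lemma free_rel_two : (⁅x0 * x1⁻¹, x0⁻¹ * x0⁻¹ * x1 * x0 * x0⁆ : F) = 1 := by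
  have h := rel_eq_one (r := ⁅FreeGroup.of (0 : Fin 2) * (FreeGroup.of (1 : Fin 2))⁻¹,
      (FreeGroup.of (0 : Fin 2))⁻¹ * (FreeGroup.of (0 : Fin 2))⁻¹ * FreeGroup.of (1 : Fin 2) *
        FreeGroup.of (0 : Fin 2) * FreeGroup.of (0 : Fin 2)⁆)
    (by simp [thompsonRels])
  rw [map_commutatorElement] at h
  simp only [map_mul, map_inv] at h
  exact h

lemma rel0 {k : ℕ} (hk : 1 ≤ k) : x0⁻¹ * x k * x0 = x (k + 1) := by
  obtain ⟨m, rfl⟩ : ∃ m, k = m + 1 := ⟨k - 1, by omega⟩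
  show x0⁻¹ * ((x0 ^ m)⁻¹ * x1 * x0 ^ m) * x0 = (x0 ^ (m+1))⁻¹ * x1 * x0 ^ (m+1)
  rw [pow_succ]
  group

lemma x_two : x 2 = x0⁻¹ * x1 * x0 := by
  show (x0 ^ 1)⁻¹ * x1 * x0 ^ 1 = _
  rw [pow_one]

lemma x_three : x 3 = x0⁻¹ * x0⁻¹ * x1 * x0 * x0 := by
  show (x0 ^ 2)⁻¹ * x1 * x0 ^ 2 = _
  rw [pow_two]
  group

lemma base12 : x1⁻¹ * x 2 * x1 = x 3 := by
  have h := comm_helper2 free_rel_one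
  rw [← x_two] at h
  rw [h]
  exact rel0 (by omega)

lemma base13 : x1⁻¹ * x 3 * x1 = x 4 := by
  have h := comm_helper2 free_rel_two
  rw [← x_three] at h
  rw [h]
  exact rel0 (by omega)

lemma relation_pos : ∀ j, ∀ i, 1 ≤ i → i < j → (x i)⁻¹ * x j * x i = x (j + 1) := by
  intro j
  induction j using Nat.strong_induction_on with
  | _ j IH =>
  have conjstep : ∀ i, 2 ≤ i → i < j → (x i)⁻¹ * x j * x i = x (j + 1) := by
    intro i h2 hij
    obtain ⟨i', rfl⟩ : ∃ i', i = i' + 1 := ⟨i - 1, by omega⟩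
    obtain ⟨j', rfl⟩ : ∃ j', j = j' + 1 := ⟨j - 1, by omega⟩
    have e1 : x (i' + 1) = x0⁻¹ * x i' * x0 := (rel0 (by omega)).symm
    have e2 : x (j' + 1) = x0⁻¹ * x j' * x0 := (rel0 (by omega)).symm
    have ihx : (x i')⁻¹ * x j' * x i' = x (j' + 1) := IH j' (by omega) i' (by omega) (by omega)
    calc (x (i'+1))⁻¹ * x (j'+1) * x (i'+1)
        = (x0⁻¹ * x i' * x0)⁻¹ * (x0⁻¹ * x j' * x0) * (x0⁻¹ * x i' * x0) := by rw [← e1, ← e2]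
      _ = x0⁻¹ * ((x i')⁻¹ * x j' * x i') * x0 := by group
      _ = x0⁻¹ * x (j' + 1) * x0 := by rw [ihx]
      _ = x (j' + 2) := rel0 (by omega)
  intro i h1 hij
  rcases Nat.lt_or_ge i 2 with h2 | h2
  · -- i = 1
    have hi1 : i = 1 := by omega
    subst hi1
    rcases Nat.lt_or_ge j 4 with hj4 | hj4
    · interval_cases j
      · rw [x_one]; exact base12
      · rw [x_one]; exact base13
    · -- j ≥ 4
      obtain ⟨j', rfl⟩ : ∃ j', j = j' + 1 := ⟨j - 1, by omega⟩
      have h2j : (x 2)⁻¹ * x j' * x 2 = x (j' + 1) := IH j' (by omega) 2 (by omega) (by omega)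
      have h1j : (x 1)⁻¹ * x j' * x 1 = x (j' + 1) := IH j' (by omega) 1 (by omega) (by omega)
      have h3j : (x 3)⁻¹ * x (j' + 1) * x 3 = x (j' + 2) := conjstep 3 (by omega) (by omega)
      have e12 : (x 1)⁻¹ * x 2 * x 1 = x 3 := by rw [x_one]; exact base12
      have e12' : (x 1)⁻¹ * (x 2)⁻¹ * x 1 = (x 3)⁻¹ := by rw [← e12]; group
      calc (x 1)⁻¹ * x (j' + 1) * x 1
          = (x 1)⁻¹ * ((x 2)⁻¹ * x j' * x 2) * x 1 := by rw [h2j]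
        _ = ((x 1)⁻¹ * (x 2)⁻¹ * x 1) * ((x 1)⁻¹ * x j' * x 1) * ((x 1)⁻¹ * x 2 * x 1) := by
            group
        _ = (x 3)⁻¹ * x (j' + 1) * x 3 := by rw [e12', h1j, e12]
        _ = x (j' + 2) := h3j
  · exact conjstep i h2 hij

lemma relation {i j : ℕ} (hij : i < j) : (x i)⁻¹ * x j * x i = x (j + 1) := by
  rcases Nat.eq_zero_or_pos i with h0 | h1
  · subst h0
    rw [x_zero]
    exact rel0 (by omega)
  · exact relation_pos j i h1 hij

lemma xrel_flip {j k : ℕ} (h : j < k) : (x k)⁻¹ * x j = x j * (x (k + 1))⁻¹ := by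
  have h1 : x k * x j = x j * x (k + 1) := by rw [← relation h]; group
  calc (x k)⁻¹ * x j = (x k)⁻¹ * (x j * x (k+1)) * (x (k+1))⁻¹ := by group
    _ = (x k)⁻¹ * (x k * x j) * (x (k+1))⁻¹ := by rw [h1]
    _ = x j * (x (k + 1))⁻¹ := by group

lemma xrel_flip_pow {j k : ℕ} (s : ℕ) (h : j < k) :
    (x k)⁻¹ * (x j) ^ s = (x j) ^ s * (x (k + s))⁻¹ := by
  induction s generalizing k with
  | zero => simp
  | succ s ih =>
    have e : (x j) ^ (s + 1) = x j * (x j) ^ s := by rw [pow_succ']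
    rw [e]
    calc (x k)⁻¹ * (x j * (x j) ^ s) = ((x k)⁻¹ * x j) * (x j) ^ s := by group
      _ = x j * ((x (k+1))⁻¹ * (x j) ^ s) := by rw [xrel_flip h]; group
      _ = x j * ((x j) ^ s * (x (k + 1 + s))⁻¹) := by rw [ih (by omega)]
      _ = (x j * (x j) ^ s) * (x (k + (s + 1)))⁻¹ := by
          rw [show k + 1 + s = k + (s + 1) by omega]; group

lemma xcancel {k s : ℕ} (hs : 1 ≤ s) : (x k)⁻¹ * (x k) ^ s = (x k) ^ (s - 1) := by
  obtain ⟨s', rfl⟩ : ∃ s', s = s' + 1 := ⟨s - 1, by omega⟩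
  rw [pow_succ', ← mul_assoc]
  simp

/-- product of powers given by a list of (index, exponent) pairs -/
def wprod (l : List (ℕ × ℕ)) : F := (l.map fun p => x p.1 ^ p.2).prod

@[simp] lemma wprod_nil : wprod [] = 1 := rfl

@[simp] lemma wprod_cons (p : ℕ × ℕ) (l : List (ℕ × ℕ)) :
    wprod (p :: l) = x p.1 ^ p.2 * wprod l := by
  simp [wprod]

/-- passing condition for `x k⁻¹` through a product -/
def okl : ℕ → List (ℕ × ℕ) → Prop
  | _, [] => True
  | k, p :: l => p.1 < k ∧ okl (k + p.2) l

lemma pass : ∀ (l₁ : List (ℕ × ℕ)) (k : ℕ) (p : ℕ × ℕ) (l₂ : List (ℕ × ℕ)),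
    okl k l₁ → p.1 = k + (l₁.map Prod.snd).sum → 1 ≤ p.2 →
    (x k)⁻¹ * wprod (l₁ ++ p :: l₂) = wprod (l₁ ++ (p.1, p.2 - 1) :: l₂) := by
  intro l₁
  induction l₁ with
  | nil =>
    intro k p l₂ _ hp hs
    simp only [List.nil_append, wprod_cons]
    have hk : p.1 = k := by simpa using hp
    subst hk
    rw [← mul_assoc, xcancel hs]
  | cons q l₁ ih =>
    intro k p l₂ hok hp hs
    obtain ⟨hq, hok'⟩ := hok
    simp only [List.cons_append, wprod_cons]
    calc (x k)⁻¹ * (x q.1 ^ q.2 * wprod (l₁ ++ p :: l₂))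
        = ((x k)⁻¹ * x q.1 ^ q.2) * wprod (l₁ ++ p :: l₂) := by group
      _ = x q.1 ^ q.2 * ((x (k + q.2))⁻¹ * wprod (l₁ ++ p :: l₂)) := by
          rw [xrel_flip_pow q.2 hq]; group
      _ = x q.1 ^ q.2 * wprod (l₁ ++ (p.1, p.2 - 1) :: l₂) := by
          rw [ih (k + q.2) p l₂ hok' (by simp at hp ⊢; omega) hs]

lemma prodX_eq_wprod : ∀ (is rs : List ℕ), prodX is rs = wprod (is.zip rs)
  | [], _ => by simp [prodX, wprod]
  | _ :: _, [] => by simp [prodX, wprod]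
  | i :: is, r :: rs => by
    simp only [prodX, List.zipWith_cons_cons, List.prod_cons, List.zip_cons_cons, wprod_cons]
    have := prodX_eq_wprod is rs
    simp only [prodX] at this
    rw [this]

end FRelations

section NFUnique

def elt (is rs js ss : List ℕ) : F := prodX is rs * (prodX js ss)⁻¹

lemma phi_wprod_pow (p : ℕ × ℕ) : phi (x p.1 ^ p.2) = famE p.1 ^ p.2 := by
  rw [map_pow, phi_x]

lemma fixBelow_wprod {m : ℕ} : ∀ (l : List (ℕ × ℕ)), (∀ p ∈ l, m ≤ p.1) →
    FixBelow m (phi (wprod l))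
  | [], _ => by rw [wprod_nil, map_one]; exact FixBelow.one m
  | p :: l, h => by
    rw [wprod_cons, map_mul, phi_wprod_pow]
    exact ((FixBelow.famE (h p (by simp))).pow p.2).mul
      (fixBelow_wprod l (fun q hq => h q (by simp [hq])))

lemma relAt_wprod {m : ℕ} : ∀ (l : List (ℕ × ℕ)), (∀ p ∈ l, m ≤ p.1) →
    RelAt m (phi (wprod l)) (phi (wprod (l.map fun p => (p.1 - m, p.2))))
  | [], _ => by rw [wprod_nil, map_one]; exact RelAt.one m
  | p :: l, h => by
    rw [wprod_cons, map_mul, phi_wprod_pow, List.map_cons, wprod_cons, map_mul, phi_wprod_pow]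
    have hp : m ≤ p.1 := h p (by simp)
    have h1 : RelAt m (famE p.1) (famE (p.1 - m)) := by
      have := RelAt.famE m (p.1 - m)
      rwa [show m + (p.1 - m) = p.1 by omega] at this
    exact (h1.pow p.2).mul (relAt_wprod l (fun q hq => h q (by simp [hq])))

lemma fst_mem_zip {l1 l2 : List ℕ} {p : ℕ × ℕ} (h : p ∈ l1.zip l2) : p.1 ∈ l1 :=
  (List.of_mem_zip (by rwa [← Prod.mk.eta (p := p)] at h)).1

lemma fixBelow_elt {m : ℕ} {is rs js ss : List ℕ} (hi : ∀ i ∈ is, m ≤ i)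
    (hj : ∀ j ∈ js, m ≤ j) : FixBelow m (phi (elt is rs js ss)) := by
  rw [elt, map_mul, map_inv, prodX_eq_wprod, prodX_eq_wprod]
  exact (fixBelow_wprod _ (fun p hp => hi p.1 (fst_mem_zip hp))).mul
    (fixBelow_wprod _ (fun p hp => hj p.1 (fst_mem_zip hp))).inv

lemma zip_map_sub (l1 l2 : List ℕ) (m : ℕ) :
    (l1.map (· - m)).zip l2 = (l1.zip l2).map fun p => (p.1 - m, p.2) := by
  rw [List.zip_map_left]
  rfl

lemma relAt_elt {m : ℕ} {is rs js ss : List ℕ} (hi : ∀ i ∈ is, m ≤ i)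
    (hj : ∀ j ∈ js, m ≤ j) :
    RelAt m (phi (elt is rs js ss))
      (phi (elt (is.map (· - m)) rs (js.map (· - m)) ss)) := by
  rw [elt, elt, map_mul, map_inv, map_mul, map_inv, prodX_eq_wprod, prodX_eq_wprod,
    prodX_eq_wprod, prodX_eq_wprod, zip_map_sub, zip_map_sub]
  exact (relAt_wprod _ (fun p hp => hi p.1 (fst_mem_zip hp))).mul
    (relAt_wprod _ (fun p hp => hj p.1 (fst_mem_zip hp))).inv

/-- head of a sorted list is its minimum -/
lemma chain'_head_le {a : ℕ} {l : List ℕ} (h : List.Chain' (· < ·) (a :: l)) :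
    ∀ b ∈ a :: l, a ≤ b := by
  intro b hb
  rcases List.mem_cons.mp hb with rfl | hb
  · exact le_refl b
  · exact le_of_lt (List.rel_of_pairwise_cons (List.isChain_iff_pairwise.mp h) hb)

lemma chain'_sub {l : List ℕ} {m : ℕ} (h : List.Chain' (· < ·) l)
    (hm : ∀ a ∈ l, m ≤ a) : List.Chain' (· < ·) (l.map (· - m)) := by
  unfold List.Chain' at h ⊢
  rw [List.isChain_iff_pairwise] at h ⊢
  rw [List.pairwise_map]
  exact h.imp_of_mem (fun {a b} ha hb hab => by
    have := hm a ha; have := hm b hb; omega)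

lemma mem_map_sub {l : List ℕ} {m i : ℕ} (hm : ∀ a ∈ l, m ≤ a) :
    i ∈ l.map (· - m) ↔ i + m ∈ l := by
  constructor
  · rintro hi
    obtain ⟨a, ha, rfl⟩ := List.mem_map.mp hi
    have := hm a ha
    rwa [show a - m + m = a by omega]
  · intro hi
    exact List.mem_map.mpr ⟨i + m, hi, by omega⟩

lemma map_sub_add {l : List ℕ} {m : ℕ} (hm : ∀ a ∈ l, m ≤ a) :
    (l.map (· - m)).map (· + m) = l := by
  induction l with
  | nil => rfl
  | cons a l ih =>
    simp only [List.map_cons, List.map_map]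
    have ha := hm a (by simp)
    have ih' := ih (fun b hb => hm b (by simp [hb]))
    rw [List.map_map] at ih'
    rw [show a - m + m = a by omega, ih']

/-- peeling the `x 0` power off a sorted positive-exponent product -/
lemma peel {is rs : List ℕ} (hlen : is.length = rs.length)
    (hch : List.Chain' (· < ·) is) (hpos : ∀ r ∈ rs, 0 < r) :
    ∃ (r0 : ℕ) (is' rs' : List ℕ),
      prodX is rs = x 0 ^ r0 * prodX is' rs' ∧
      is'.length = rs'.length ∧ List.Chain' (· < ·) is' ∧ (∀ r ∈ rs', 0 < r) ∧
      (∀ i ∈ is', 1 ≤ i) ∧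
      (0 ∈ is ↔ 0 < r0) ∧
      (∀ i, i ∈ is' ↔ (i ∈ is ∧ 1 ≤ i)) ∧
      rs.sum = r0 + rs'.sum ∧
      ((0 < r0 ∧ is = 0 :: is' ∧ rs = r0 :: rs') ∨ (r0 = 0 ∧ is = is' ∧ rs = rs')) := by
  match is, rs with
  | [], [] =>
    exact ⟨0, [], [], by simp [prodX], rfl, List.isChain_nil, by simp, by simp, by simp,
      by simp, by simp, Or.inr ⟨rfl, rfl, rfl⟩⟩
  | [], r :: rs => simp at hlen
  | i :: is, [] => simp at hlen
  | 0 :: is, r :: rs =>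
    have htail : List.Chain' (· < ·) is := hch.tail
    have hmem : ∀ i ∈ is, 1 ≤ i := by
      intro i hi
      have := List.rel_of_pairwise_cons (List.isChain_iff_pairwise.mp hch) hi
      omega
    refine ⟨r, is, rs, ?_, by simpa using hlen, htail, fun s hs => hpos s (by simp [hs]),
      hmem, ?_, ?_, by simp, Or.inl ⟨hpos r (by simp), rfl, rfl⟩⟩
    · simp [prodX]
    · constructor
      · intro _; exact hpos r (by simp)
      · intro _; exact List.mem_cons_self
    · intro i
      constructor
      · intro hi
        exact ⟨by simp [hi], hmem i hi⟩
      · rintro ⟨hi, h1⟩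
        rcases List.mem_cons.mp hi with rfl | hi
        · omega
        · exact hi
  | (i + 1) :: is, r :: rs =>
    have h0 : (0 : ℕ) ∉ (i + 1) :: is := by
      intro h
      have := chain'_head_le hch 0 h
      omega
    have hmem : ∀ j ∈ (i+1) :: is, 1 ≤ j := by
      intro j hj
      have := chain'_head_le hch j hj
      omega
    exact ⟨0, (i+1) :: is, r :: rs, by simp, hlen, hch, hpos, hmem,
      by simp [h0], fun j => ⟨fun hj => ⟨hj, hmem j hj⟩, fun hj => hj.1⟩, by simp,
      Or.inr ⟨rfl, rfl, rfl⟩⟩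

end NFUnique

section NFUnique2

lemma pat {r0 s0 : ℕ} {π : Equiv.Perm S} (hπ : FixBelow 1 π) (b : ℕ) (hb : 1 ≤ b) (t : S) :
    (sig ^ r0 * π * (sig ^ s0)⁻¹) (zs (s0 + b) t) = zs (r0 + b) t := by
  obtain ⟨b', rfl⟩ : ∃ b', b = b' + 1 := ⟨b - 1, by omega⟩
  have h1 : (sig ^ s0)⁻¹ (zs (s0 + (b' + 1)) t) = zs (b' + 1) t := by
    have h := sig_pow_zs s0 (b' + 1) t (by omega)
    rw [show b' + 1 + s0 = s0 + (b' + 1) by omega] at h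
    rw [← h, Equiv.Perm.inv_apply_self]
  have h2 : π (zs (b' + 1) t) = zs (b' + 1) t := hπ 0 (by omega) (zs b' t)
  rw [Equiv.Perm.mul_apply, Equiv.Perm.mul_apply, h1, h2, sig_pow_zs r0 (b' + 1) t (by omega),
    show b' + 1 + r0 = r0 + (b' + 1) by omega]

lemma isNF_shift {m : ℕ} {is rs js ss : List ℕ} (h : IsNF is rs js ss)
    (hi : ∀ i ∈ is, m ≤ i) (hj : ∀ j ∈ js, m ≤ j) :
    IsNF (is.map (· - m)) rs (js.map (· - m)) ss := by
  obtain ⟨h1, h2, h3, h4, h5, h6, h7⟩ := h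
  refine ⟨by simpa using h1, by simpa using h2, chain'_sub h3 hi, chain'_sub h4 hj, h5, h6, ?_⟩
  intro i hii hij
  rw [mem_map_sub hi] at hii
  rw [mem_map_sub hj] at hij
  rcases h7 (i + m) hii hij with h | h
  · left; rw [mem_map_sub hi]; rwa [show i + 1 + m = i + m + 1 by omega]
  · right; rw [mem_map_sub hj]; rwa [show i + 1 + m = i + m + 1 by omega]

lemma elt_peeled {is rs js ss is' rs' js' ss' : List ℕ} {r0 s0 : ℕ}
    (hp : prodX is rs = x 0 ^ r0 * prodX is' rs')
    (hn : prodX js ss = x 0 ^ s0 * prodX js' ss') :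
    phi (elt is rs js ss) = sig ^ r0 * phi (elt is' rs' js' ss') * (sig ^ s0)⁻¹ := by
  rw [elt, hp, hn, elt]
  simp only [map_mul, map_inv, map_pow, x_zero, phi_x0]
  group

lemma movesM : ∀ n, ∀ is rs js ss : List ℕ, rs.sum + ss.sum ≤ n → IsNF is rs js ss →
    (0 ∈ is ∨ 0 ∈ js) →
    ∃ t, phi (elt is rs js ss) (Stream'.cons false t) ≠ Stream'.cons false t := by
  intro n
  induction n using Nat.strong_induction_on with
  | _ n IH =>
  intro is rs js ss hsum hnf h0
  obtain ⟨hl1, hl2, hc1, hc2, hp1, hp2, hpair⟩ := hnf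
  obtain ⟨r0, is', rs', hPeq, hl1', hc1', hp1', hge1, hiff0p, hiffp, hsump, hstructp⟩ :=
    peel hl1 hc1 hp1
  obtain ⟨s0, js', ss', hNeq, hl2', hc2', hp2', hge1n, hiff0n, hiffn, hsumn, hstructn⟩ :=
    peel hl2 hc2 hp2
  have hphi : phi (elt is rs js ss) = sig ^ r0 * phi (elt is' rs' js' ss') * (sig ^ s0)⁻¹ :=
    elt_peeled hPeq hNeq
  have hfix : FixBelow 1 (phi (elt is' rs' js' ss')) := fixBelow_elt hge1 hge1n
  have hr0s0 : 0 < r0 ∨ 0 < s0 := by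
    rcases h0 with h | h
    · exact Or.inl (hiff0p.mp h)
    · exact Or.inr (hiff0n.mp h)
  by_cases hne : r0 = s0
  · -- r0 = s0 ≥ 1
    subst hne
    have hr1 : 1 ≤ r0 := by rcases hr0s0 with h | h <;> omega
    have h1mem : 1 ∈ is' ∨ 1 ∈ js' := by
      rcases hpair 0 (hiff0p.mpr hr1) (hiff0n.mpr hr1) with h | h
      · exact Or.inl ((hiffp 1).mpr ⟨h, le_refl 1⟩)
      · exact Or.inr ((hiffn 1).mpr ⟨h, le_refl 1⟩)
    have midpair : ∀ i, i ∈ is' → i ∈ js' → i + 1 ∈ is' ∨ i + 1 ∈ js' := by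
      intro i hi hj
      obtain ⟨hi1, _⟩ := (hiffp i).mp hi
      obtain ⟨hj1, _⟩ := (hiffn i).mp hj
      rcases hpair i hi1 hj1 with h | h
      · exact Or.inl ((hiffp (i+1)).mpr ⟨h, by omega⟩)
      · exact Or.inr ((hiffn (i+1)).mpr ⟨h, by omega⟩)
    have hnfmid : IsNF is' rs' js' ss' := ⟨hl1', hl2', hc1', hc2', hp1', hp2', midpair⟩
    have hnfS : IsNF (is'.map (· - 1)) rs' (js'.map (· - 1)) ss' :=
      isNF_shift hnfmid hge1 hge1n
    have h0S : 0 ∈ is'.map (· - 1) ∨ 0 ∈ js'.map (· - 1) := by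
      rcases h1mem with h | h
      · left; rw [mem_map_sub hge1]; simpa using h
      · right; rw [mem_map_sub hge1n]; simpa using h
    obtain ⟨t', ht'⟩ := IH (rs'.sum + ss'.sum) (by omega) (is'.map (· - 1)) rs'
      (js'.map (· - 1)) ss' (le_refl _) hnfS h0S
    have hRel : RelAt 1 (phi (elt is' rs' js' ss'))
        (phi (elt (is'.map (· - 1)) rs' (js'.map (· - 1)) ss')) := relAt_elt hge1 hge1n
    obtain ⟨s0', rfl⟩ : ∃ s0', r0 = s0' + 1 := ⟨r0 - 1, by omega⟩
    refine ⟨zs s0' t', ?_⟩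
    intro hcon
    have e1 : (sig ^ (s0' + 1))⁻¹ (zs (s0' + 1) t') = ap 1 (Stream'.cons false t') := by
      have h := sig_pow_os_big (k := s0' + 1) (j := 1) (t := t') (by omega) (by omega)
      rw [show s0' + 1 - 1 + 1 = s0' + 1 by omega] at h
      rw [← h, Equiv.Perm.inv_apply_self]
    have e2 : phi (elt is' rs' js' ss') (ap 1 (Stream'.cons false t'))
        = ap 1 (phi (elt (is'.map (· - 1)) rs' (js'.map (· - 1)) ss')
            (Stream'.cons false t')) := hRel _
    have hcon' : (sig ^ (s0' + 1) * phi (elt is' rs' js' ss') * (sig ^ (s0' + 1))⁻¹)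
        (zs (s0' + 1) t') = zs (s0' + 1) t' := by
      rw [← hphi]; exact hcon
    rw [Equiv.Perm.mul_apply, Equiv.Perm.mul_apply, e1, e2] at hcon'
    have e3 : ap 1 (phi (elt (is'.map (· - 1)) rs' (js'.map (· - 1)) ss')
        (Stream'.cons false t')) = (sig ^ (s0' + 1))⁻¹ (zs (s0' + 1) t') := by
      rw [← hcon', Equiv.Perm.inv_apply_self]
    rw [e1] at e3
    exact ht' (ap_inj e3)
  · -- r0 ≠ s0
    refine ⟨zs s0 (Stream'.const true), ?_⟩
    have h1 : phi (elt is rs js ss) (zs (s0 + 1) (Stream'.const true))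
        = zs (r0 + 1) (Stream'.const true) := by
      rw [hphi]; exact pat hfix 1 (le_refl 1) _
    intro hcon
    have hcon2 : phi (elt is rs js ss) (zs (s0 + 1) (Stream'.const true))
        = zs (s0 + 1) (Stream'.const true) := hcon
    rw [h1] at hcon2
    have := (zs_inj hcon2).1
    omega

def MinDet (m : ℕ) (π : Equiv.Perm S) : Prop :=
  FixBelow m π ∧ ∃ t, π (ap m (Stream'.cons false t)) ≠ ap m (Stream'.cons false t)

lemma minDet_unique {m1 m2 : ℕ} {π : Equiv.Perm S} (h1 : MinDet m1 π) (h2 : MinDet m2 π) :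
    m1 = m2 := by
  by_contra h
  rcases Nat.lt_or_ge m1 m2 with hlt | hge
  · obtain ⟨t, ht⟩ := h1.2
    exact ht (h2.1 m1 hlt t)
  · obtain ⟨t, ht⟩ := h2.2
    exact ht (h1.1 m2 (by omega) t)

lemma nf_minDet {is rs js ss : List ℕ} (hnf : IsNF is rs js ss)
    (hne : is ≠ [] ∨ js ≠ []) :
    ∃ μ, (μ ∈ is ∨ μ ∈ js) ∧ (∀ i ∈ is, μ ≤ i) ∧ (∀ j ∈ js, μ ≤ j) ∧
      MinDet μ (phi (elt is rs js ss)) := by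
  have hexists : ∃ μ, (μ ∈ is ∨ μ ∈ js) ∧ (∀ i ∈ is, μ ≤ i) ∧ (∀ j ∈ js, μ ≤ j) := by
    match is, js, hne with
    | [], [], hne => rcases hne with h | h <;> simp at h
    | [], j :: js, _ =>
      exact ⟨j, Or.inr (by simp), by simp, chain'_head_le hnf.2.2.2.1⟩
    | i :: is, [], _ =>
      exact ⟨i, Or.inl (by simp), chain'_head_le hnf.2.2.1, by simp⟩
    | i :: is, j :: js, _ =>
      refine ⟨min i j, ?_, ?_, ?_⟩
      · rcases le_total i j with h | h
        · exact Or.inl (by rw [min_eq_left h]; simp)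
        · exact Or.inr (by rw [min_eq_right h]; simp)
      · intro a ha
        have := chain'_head_le hnf.2.2.1 a ha
        omega
      · intro a ha
        have := chain'_head_le hnf.2.2.2.1 a ha
        omega
  obtain ⟨μ, hμmem, hμi, hμj⟩ := hexists
  refine ⟨μ, hμmem, hμi, hμj, fixBelow_elt hμi hμj, ?_⟩
  have hnfS := isNF_shift hnf hμi hμj
  have h0S : 0 ∈ is.map (· - μ) ∨ 0 ∈ js.map (· - μ) := by
    rcases hμmem with h | h
    · exact Or.inl (List.mem_map.mpr ⟨μ, h, by omega⟩)
    · exact Or.inr (List.mem_map.mpr ⟨μ, h, by omega⟩)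
  obtain ⟨t, ht⟩ := movesM (rs.sum + ss.sum) _ _ _ _ (le_refl _) hnfS h0S
  refine ⟨t, ?_⟩
  have hRel := relAt_elt (m := μ) (is := is) (rs := rs) (js := js) (ss := ss) hμi hμj
  rw [hRel (Stream'.cons false t)]
  intro hcon
  exact ht (ap_inj hcon)

end NFUnique2

section NFUnique3

lemma sig_pow_false : ∀ (c : ℕ) (t : S),
    ∃ u, (sig ^ c) (Stream'.cons false t) = Stream'.cons false u := by
  intro c
  induction c with
  | zero => exact fun t => ⟨t, rfl⟩
  | succ c ih =>
    intro t
    rw [pow_succ, Equiv.Perm.mul_apply, sig_ff]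
    exact ih (Stream'.cons false t)

lemma minDet_conj {m c : ℕ} {π : Equiv.Perm S} (hm : 1 ≤ m) (h : MinDet m π) :
    MinDet (m + c) ((sig ^ c)⁻¹ * π * sig ^ c) := by
  obtain ⟨hfix, t0, hmove⟩ := h
  constructor
  · intro k hk t
    rw [Equiv.Perm.mul_apply, Equiv.Perm.mul_apply]
    have hfix2 : π ((sig ^ c) (ap k (Stream'.cons false t)))
        = (sig ^ c) (ap k (Stream'.cons false t)) := by
      rcases Nat.lt_or_ge c k with hck | hck
      · rw [sig_pow_os_small c t hck]
        exact hfix (k - c) (by omega) t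
      · rcases Nat.eq_zero_or_pos k with rfl | hk1
        · obtain ⟨u, hu⟩ := sig_pow_false c t
          show π ((sig ^ c) (Stream'.cons false t)) = (sig ^ c) (Stream'.cons false t)
          rw [hu]
          exact hfix 0 (by omega) u
        · rw [sig_pow_os_big (k := c) (j := k) t hk1 hck]
          obtain ⟨w, hw⟩ : ∃ w, c - k + 1 = w + 1 := ⟨c - k, rfl⟩
          rw [hw]
          exact hfix 0 (by omega) (zs w t)
    rw [hfix2, Equiv.Perm.inv_apply_self]
  · refine ⟨t0, ?_⟩
    have he : (sig ^ c) (ap (m + c) (Stream'.cons false t0))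
        = ap m (Stream'.cons false t0) := by
      rcases Nat.eq_zero_or_pos c with rfl | hc1
      · rw [pow_zero]; rfl
      · have h2 := sig_pow_os_small c (j := m + c) t0 (by omega)
        rwa [show m + c - c = m by omega] at h2
    rw [Equiv.Perm.mul_apply, Equiv.Perm.mul_apply, he]
    intro hcon
    have h3 : π (ap m (Stream'.cons false t0))
        = (sig ^ c) (ap (m + c) (Stream'.cons false t0)) := by
      rw [← hcon, Equiv.Perm.apply_inv_self]
    rw [he] at h3
    exact hmove h3

/-- peel both positive and negative `x 0` powers off an NF element -/
lemma peelNF {is rs js ss : List ℕ} (hnf : IsNF is rs js ss) :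
    ∃ (r0 s0 : ℕ) (isv rsv jsv ssv : List ℕ),
      phi (elt is rs js ss) = sig ^ r0 * phi (elt isv rsv jsv ssv) * (sig ^ s0)⁻¹ ∧
      IsNF isv rsv jsv ssv ∧
      (∀ i ∈ isv, 1 ≤ i) ∧ (∀ j ∈ jsv, 1 ≤ j) ∧
      (0 ∈ is ↔ 0 < r0) ∧ (0 ∈ js ↔ 0 < s0) ∧
      (∀ i, i ∈ isv ↔ (i ∈ is ∧ 1 ≤ i)) ∧ (∀ j, j ∈ jsv ↔ (j ∈ js ∧ 1 ≤ j)) ∧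
      rs.sum = r0 + rsv.sum ∧ ss.sum = s0 + ssv.sum ∧
      ((0 < r0 ∧ is = 0 :: isv ∧ rs = r0 :: rsv) ∨ (r0 = 0 ∧ is = isv ∧ rs = rsv)) ∧
      ((0 < s0 ∧ js = 0 :: jsv ∧ ss = s0 :: ssv) ∨ (s0 = 0 ∧ js = jsv ∧ ss = ssv)) := by
  obtain ⟨hl1, hl2, hc1, hc2, hp1, hp2, hpair⟩ := hnf
  obtain ⟨r0, isv, rsv, hPeq, hl1', hc1', hp1', hge1, hiff0p, hiffp, hsump, hstructp⟩ :=
    peel hl1 hc1 hp1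
  obtain ⟨s0, jsv, ssv, hNeq, hl2', hc2', hp2', hge1n, hiff0n, hiffn, hsumn, hstructn⟩ :=
    peel hl2 hc2 hp2
  have midpair : ∀ i, i ∈ isv → i ∈ jsv → i + 1 ∈ isv ∨ i + 1 ∈ jsv := by
    intro i hi hj
    obtain ⟨hi1, _⟩ := (hiffp i).mp hi
    obtain ⟨hj1, _⟩ := (hiffn i).mp hj
    rcases hpair i hi1 hj1 with h | h
    · exact Or.inl ((hiffp (i+1)).mpr ⟨h, by omega⟩)
    · exact Or.inr ((hiffn (i+1)).mpr ⟨h, by omega⟩)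
  exact ⟨r0, s0, isv, rsv, jsv, ssv, elt_peeled hPeq hNeq,
    ⟨hl1', hl2', hc1', hc2', hp1', hp2', midpair⟩, hge1, hge1n, hiff0p, hiff0n,
    hiffp, hiffn, hsump, hsumn,
    hstructp.imp id (fun h => ⟨h.1, h.2.1, h.2.2⟩), hstructn.imp id (fun h => ⟨h.1, h.2.1, h.2.2⟩)⟩

lemma unq_contra {c : ℕ} (hc : 1 ≤ c)
    {isv rsv jsv ssv isv' rsv' jsv' ssv' : List ℕ}
    (hnfv : IsNF isv rsv jsv ssv) (hnfv' : IsNF isv' rsv' jsv' ssv')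
    (hge1 : ∀ i ∈ isv, 1 ≤ i) (hge1n : ∀ j ∈ jsv, 1 ≤ j)
    (hge1' : ∀ i ∈ isv', 1 ≤ i) (hge1n' : ∀ j ∈ jsv', 1 ≤ j)
    (h1mem : 1 ∈ isv' ∨ 1 ∈ jsv')
    (hconj : phi (elt isv' rsv' jsv' ssv')
      = (sig ^ c)⁻¹ * phi (elt isv rsv jsv ssv) * sig ^ c) :
    False := by
  have hne' : isv' ≠ [] ∨ jsv' ≠ [] := by
    rcases h1mem with h | h
    · exact Or.inl (List.ne_nil_of_mem h)
    · exact Or.inr (List.ne_nil_of_mem h)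
  obtain ⟨μ', hmem', hi', hj', hdet'⟩ := nf_minDet hnfv' hne'
  have hμ'1 : μ' = 1 := by
    have hup : μ' ≤ 1 := by
      rcases h1mem with h | h
      exacts [hi' 1 h, hj' 1 h]
    have hlow : 1 ≤ μ' := by
      rcases hmem' with h | h
      exacts [hge1' μ' h, hge1n' μ' h]
    omega
  by_cases hve : isv = [] ∧ jsv = []
  · obtain ⟨rfl, rfl⟩ := hve
    have h1 : phi (elt [] rsv [] ssv) = 1 := by
      simp [elt, prodX]
    rw [h1] at hconj
    simp only [mul_one, inv_mul_cancel] at hconj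
    obtain ⟨t, ht⟩ := hdet'.2
    apply ht
    rw [hconj]
    rfl
  · have hnev : isv ≠ [] ∨ jsv ≠ [] := by tauto
    obtain ⟨μv, hmemv, hiv, hjv, hdetv⟩ := nf_minDet hnfv hnev
    have hμv1 : 1 ≤ μv := by
      rcases hmemv with h | h
      exacts [hge1 μv h, hge1n μv h]
    have hdconj : MinDet (μv + c) (phi (elt isv' rsv' jsv' ssv')) := by
      rw [hconj]
      exact minDet_conj hμv1 hdetv
    have := minDet_unique hdet' hdconj
    omega

lemma unq0 {n : ℕ}
    (IH : ∀ m, m < n → ∀ is rs js ss is' rs' js' ss' : List ℕ,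
      rs.sum + ss.sum ≤ m → IsNF is rs js ss → IsNF is' rs' js' ss' →
      phi (elt is rs js ss) = phi (elt is' rs' js' ss') →
      is = is' ∧ rs = rs' ∧ js = js' ∧ ss = ss')
    {is rs js ss is' rs' js' ss' : List ℕ}
    (hsum : rs.sum + ss.sum ≤ n)
    (hnfA : IsNF is rs js ss) (hnfB : IsNF is' rs' js' ss')
    (h0A : 0 ∈ is ∨ 0 ∈ js) (h0B : 0 ∈ is' ∨ 0 ∈ js')
    (heq : phi (elt is rs js ss) = phi (elt is' rs' js' ss')) :
    is = is' ∧ rs = rs' ∧ js = js' ∧ ss = ss' := by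
  obtain ⟨a0, b0, isv, rsv, jsv, ssv, hphiA, hnfvA, hge1A, hge1nA, hiff0pA, hiff0nA,
    hiffpA, hiffnA, hsumpA, hsumnA, hstpA, hstnA⟩ := peelNF hnfA
  obtain ⟨a0', b0', isv', rsv', jsv', ssv', hphiB, hnfvB, hge1B, hge1nB, hiff0pB, hiff0nB,
    hiffpB, hiffnB, hsumpB, hsumnB, hstpB, hstnB⟩ := peelNF hnfB
  have hfixA : FixBelow 1 (phi (elt isv rsv jsv ssv)) :=
    fixBelow_elt hge1A hge1nA
  have hfixB : FixBelow 1 (phi (elt isv' rsv' jsv' ssv')) :=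
    fixBelow_elt hge1B hge1nB
  -- difference detection
  have hδ : a0 + b0' = a0' + b0 := by
    have h1 := pat (r0 := a0) (s0 := b0) hfixA (b0' + 1) (by omega) (Stream'.const true)
    have h2 := pat (r0 := a0') (s0 := b0') hfixB (b0 + 1) (by omega) (Stream'.const true)
    rw [← hphiA] at h1
    rw [← hphiB] at h2
    rw [show b0' + (b0 + 1) = b0 + (b0' + 1) by omega, ← heq] at h2
    have h3 := zs_inj (h1.symm.trans h2)
    omega
  have hpos : 0 < a0 + b0 := by
    rcases h0A with h | h
    · have := hiff0pA.mp h; omega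
    · have := hiff0nA.mp h; omega
  by_cases hbb : b0 = b0'
  · -- equal negative x0-powers; cancel and recurse
    subst hbb
    have haa : a0 = a0' := by omega
    subst haa
    have hveq : phi (elt isv rsv jsv ssv) = phi (elt isv' rsv' jsv' ssv') := by
      have h := hphiA.symm.trans (heq.trans hphiB)
      have h2 := mul_right_cancel h
      exact mul_left_cancel h2
    have hmeas : rsv.sum + ssv.sum < n := by omega
    obtain ⟨e1, e2, e3, e4⟩ := IH (rsv.sum + ssv.sum) hmeas isv rsv jsv ssv
      isv' rsv' jsv' ssv' (le_refl _) hnfvA hnfvB hveq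
    subst e1; subst e2; subst e3; subst e4
    constructor
    · rcases hstpA with ⟨hp1, hp2, hp3⟩ | ⟨hp1, hp2, hp3⟩ <;>
        rcases hstpB with ⟨hq1, hq2, hq3⟩ | ⟨hq1, hq2, hq3⟩ <;>
        (try omega) <;> rw [hp2, hq2]
    constructor
    · rcases hstpA with ⟨hp1, hp2, hp3⟩ | ⟨hp1, hp2, hp3⟩ <;>
        rcases hstpB with ⟨hq1, hq2, hq3⟩ | ⟨hq1, hq2, hq3⟩ <;>
        (try omega) <;> rw [hp3, hq3]
    constructor
    · rcases hstnA with ⟨hp1, hp2, hp3⟩ | ⟨hp1, hp2, hp3⟩ <;>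
        rcases hstnB with ⟨hq1, hq2, hq3⟩ | ⟨hq1, hq2, hq3⟩ <;>
        (try omega) <;> rw [hp2, hq2]
    · rcases hstnA with ⟨hp1, hp2, hp3⟩ | ⟨hp1, hp2, hp3⟩ <;>
        rcases hstnB with ⟨hq1, hq2, hq3⟩ | ⟨hq1, hq2, hq3⟩ <;>
        (try omega) <;> rw [hp3, hq3]
  · exfalso
    rcases le_total b0 b0' with hle | hle
    · -- c = b0' - b0 ≥ 1
      obtain ⟨c, rfl⟩ : ∃ c, b0' = b0 + c := ⟨b0' - b0, by omega⟩
      have hc : 1 ≤ c := by omega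
      have ha' : a0' = a0 + c := by omega
      subst ha'
      have hconj : phi (elt isv' rsv' jsv' ssv')
          = (sig ^ c)⁻¹ * phi (elt isv rsv jsv ssv) * sig ^ c := by
        have h := hphiA.symm.trans (heq.trans hphiB)
        rw [pow_add, pow_add] at h
        refine mul_left_cancel (a := sig ^ a0 * sig ^ c) ?_
        refine mul_right_cancel (b := (sig ^ b0 * sig ^ c)⁻¹) ?_
        rw [← h]
        group
      -- B has both x0-powers positive
      have hr0' : 0 < a0 + c := by omega
      have hs0' : 0 < b0 + c := by omega
      have h1mem : 1 ∈ isv' ∨ 1 ∈ jsv' := by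
        rcases hnfB.2.2.2.2.2.2 0 (hiff0pB.mpr hr0') (hiff0nB.mpr hs0') with h | h
        · exact Or.inl ((hiffpB 1).mpr ⟨h, le_refl 1⟩)
        · exact Or.inr ((hiffnB 1).mpr ⟨h, le_refl 1⟩)
      exact unq_contra hc hnfvA hnfvB hge1A hge1nA hge1B hge1nB h1mem hconj
    · -- symmetric: c = b0 - b0' ≥ 1
      obtain ⟨c, rfl⟩ : ∃ c, b0 = b0' + c := ⟨b0 - b0', by omega⟩
      have hc : 1 ≤ c := by omega
      have ha : a0 = a0' + c := by omega
      subst ha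
      have hconj : phi (elt isv rsv jsv ssv)
          = (sig ^ c)⁻¹ * phi (elt isv' rsv' jsv' ssv') * sig ^ c := by
        have h := hphiB.symm.trans (heq.symm.trans hphiA)
        rw [pow_add, pow_add] at h
        refine mul_left_cancel (a := sig ^ a0' * sig ^ c) ?_
        refine mul_right_cancel (b := (sig ^ b0' * sig ^ c)⁻¹) ?_
        rw [← h]
        group
      have hr0 : 0 < a0' + c := by omega
      have hs0 : 0 < b0' + c := by omega
      have h1mem : 1 ∈ isv ∨ 1 ∈ jsv := by
        rcases hnfA.2.2.2.2.2.2 0 (hiff0pA.mpr hr0) (hiff0nA.mpr hs0) with h | h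
        · exact Or.inl ((hiffpA 1).mpr ⟨h, le_refl 1⟩)
        · exact Or.inr ((hiffnA 1).mpr ⟨h, le_refl 1⟩)
      exact unq_contra hc hnfvB hnfvA hge1B hge1nB hge1A hge1nA h1mem hconj

/-- Uniqueness of normal forms. -/
theorem unq : ∀ n, ∀ is rs js ss is' rs' js' ss' : List ℕ,
    rs.sum + ss.sum ≤ n → IsNF is rs js ss → IsNF is' rs' js' ss' →
    phi (elt is rs js ss) = phi (elt is' rs' js' ss') →
    is = is' ∧ rs = rs' ∧ js = js' ∧ ss = ss' := by
  intro n
  induction n using Nat.strong_induction_on with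
  | _ n IH =>
  intro is rs js ss is' rs' js' ss' hsum hnfA hnfB heq
  by_cases hA : is = [] ∧ js = []
  · obtain ⟨rfl, rfl⟩ := hA
    have hrs : rs = [] := by
      have := hnfA.1; exact (List.eq_nil_of_length_eq_zero (by simpa using this.symm))
    have hss : ss = [] := by
      have := hnfA.2.1; exact (List.eq_nil_of_length_eq_zero (by simpa using this.symm))
    subst hrs; subst hss
    by_cases hB : is' = [] ∧ js' = []
    · obtain ⟨rfl, rfl⟩ := hB
      have hrs' : rs' = [] := by
        have := hnfB.1; exact (List.eq_nil_of_length_eq_zero (by simpa using this.symm))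
      have hss' : ss' = [] := by
        have := hnfB.2.1; exact (List.eq_nil_of_length_eq_zero (by simpa using this.symm))
      exact ⟨rfl, hrs'.symm, rfl, hss'.symm⟩
    · exfalso
      have hne : is' ≠ [] ∨ js' ≠ [] := by tauto
      obtain ⟨μ, _, _, _, _, t, ht⟩ := nf_minDet hnfB hne
      apply ht
      rw [← heq]
      have h1 : phi (elt [] [] [] []) = 1 := by simp [elt, prodX]
      rw [h1]
      rfl
  · have hneA : is ≠ [] ∨ js ≠ [] := by tauto
    by_cases hB : is' = [] ∧ js' = []
    · exfalso
      obtain ⟨rfl, rfl⟩ := hB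
      obtain ⟨μ, _, _, _, _, t, ht⟩ := nf_minDet hnfA hneA
      apply ht
      rw [heq]
      have hrs' : rs' = [] := by
        have := hnfB.1; exact (List.eq_nil_of_length_eq_zero (by simpa using this.symm))
      have hss' : ss' = [] := by
        have := hnfB.2.1; exact (List.eq_nil_of_length_eq_zero (by simpa using this.symm))
      subst hrs'; subst hss'
      have h1 : phi (elt [] [] [] []) = 1 := by simp [elt, prodX]
      rw [h1]
      rfl
    · have hneB : is' ≠ [] ∨ js' ≠ [] := by tauto
      obtain ⟨μA, hmemA, hiA, hjA, hdetA⟩ := nf_minDet hnfA hneA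
      obtain ⟨μB, hmemB, hiB, hjB, hdetB⟩ := nf_minDet hnfB hneB
      rw [← heq] at hdetB
      have hμ : μA = μB := minDet_unique hdetA hdetB
      subst hμ
      have hnfAS := isNF_shift hnfA hiA hjA
      have hnfBS := isNF_shift hnfB hiB hjB
      have heqS : phi (elt (is.map (· - μA)) rs (js.map (· - μA)) ss)
          = phi (elt (is'.map (· - μA)) rs' (js'.map (· - μA)) ss') := by
        apply Equiv.ext
        intro z
        apply ap_inj (m := μA)
        rw [← relAt_elt (m := μA) (is := is) (rs := rs) (js := js) (ss := ss) hiA hjA z,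
          ← relAt_elt (m := μA) (is := is') (rs := rs') (js := js') (ss := ss') hiB hjB z, heq]
      have h0AS : 0 ∈ is.map (· - μA) ∨ 0 ∈ js.map (· - μA) := by
        rcases hmemA with h | h
        · exact Or.inl (List.mem_map.mpr ⟨μA, h, by omega⟩)
        · exact Or.inr (List.mem_map.mpr ⟨μA, h, by omega⟩)
      have h0BS : 0 ∈ is'.map (· - μA) ∨ 0 ∈ js'.map (· - μA) := by
        rcases hmemB with h | h
        · exact Or.inl (List.mem_map.mpr ⟨μA, h, by omega⟩)
        · exact Or.inr (List.mem_map.mpr ⟨μA, h, by omega⟩)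
      obtain ⟨e1, e2, e3, e4⟩ := unq0 IH hsum hnfAS hnfBS h0AS h0BS heqS
      refine ⟨?_, e2, ?_, e4⟩
      · rw [← map_sub_add (m := μA) hiA, ← map_sub_add (m := μA) hiB, e1]
      · rw [← map_sub_add (m := μA) hjA, ← map_sub_add (m := μA) hjB, e3]

end NFUnique3

section TreeLemmas
open BinTree

lemma expsAux_cons : ∀ T : BinTree, ∃ a as, expsAux T = a :: as
  | .leaf => ⟨0, [], rfl⟩
  | .node l r => by
    obtain ⟨a, as, h⟩ := expsAux_cons l
    exact ⟨a + 1, as ++ expsAux r, by simp [expsAux, h]⟩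

lemma expsAux_node_eq {l : BinTree} (r : BinTree) {a : ℕ} {as : List ℕ}
    (h : expsAux l = a :: as) :
    expsAux (BinTree.node l r) = (a + 1) :: (as ++ expsAux r) := by
  simp [expsAux, h]

lemma expsAux_node_head (l r : BinTree) :
    ∃ w as, expsAux (BinTree.node l r) = (w + 1) :: as := by
  obtain ⟨a, as, h⟩ := expsAux_cons l
  exact ⟨a, as ++ expsAux r, expsAux_node_eq r h⟩

lemma numLeaves_eq_numCarets (T : BinTree) : numLeaves T = numCarets T + 1 := by
  induction T with
  | leaf => rfl
  | node l r ihl ihr => simp only [numLeaves, numCarets, ihl, ihr]; omega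

lemma length_expsAux : ∀ T : BinTree, (expsAux T).length = numLeaves T
  | .leaf => rfl
  | .node l r => by
    obtain ⟨a, as, h⟩ := expsAux_cons l
    have hl := length_expsAux l
    have hr := length_expsAux r
    rw [expsAux_node_eq r h]
    rw [h] at hl
    simp only [List.length_cons, List.length_append] at *
    simp only [numLeaves, ← hl, ← hr]
    omega

lemma length_exps : ∀ T : BinTree, (exps T).length = numLeaves T
  | .leaf => rfl
  | .node l r => by
    have hr := length_exps r
    simp [exps, numLeaves, List.length_append, length_expsAux, hr]

lemma sum_expsAux : ∀ T : BinTree, (expsAux T).sum = numCarets T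
  | .leaf => rfl
  | .node l r => by
    obtain ⟨a, as, h⟩ := expsAux_cons l
    have hl := sum_expsAux l
    have hr := sum_expsAux r
    rw [expsAux_node_eq r h]
    rw [h] at hl
    simp only [List.sum_cons, List.sum_append] at *
    simp only [numCarets]
    omega

lemma expsAux_last : ∀ T : BinTree, ∃ l0, expsAux T = l0 ++ [0]
  | .leaf => ⟨[], rfl⟩
  | .node l r => by
    obtain ⟨a, as, h⟩ := expsAux_cons l
    obtain ⟨l0, hr⟩ := expsAux_last r
    exact ⟨(a + 1) :: (as ++ l0), by rw [expsAux_node_eq r h, hr]; simp⟩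

lemma exps_last : ∀ T : BinTree, ∃ l0, exps T = l0 ++ [0]
  | .leaf => ⟨[], rfl⟩
  | .node l r => by
    obtain ⟨l0, hr⟩ := exps_last r
    exact ⟨expsAux l ++ l0, by simp [exps, hr]⟩

lemma last_entry_zero {es l0 : List ℕ} (h : es = l0 ++ [0]) {i v : ℕ}
    (hi : es[i]? = some (v + 1)) : i + 1 < es.length := by
  subst h
  have hlen : i < l0.length + 1 := by
    have h2 := List.getElem?_eq_some_iff.mp hi
    simpa using h2.1
  rcases Nat.lt_or_ge i l0.length with h | h
  · simp only [List.length_append, List.length_cons, List.length_nil]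
    omega
  · have hieq : i = l0.length := by omega
    subst hieq
    rw [List.getElem?_append_right (le_refl _)] at hi
    simp at hi

lemma ecp_node {l r : BinTree} (h : l ≠ BinTree.leaf ∨ r ≠ BinTree.leaf) :
    exposedCaretPairs (BinTree.node l r)
      = exposedCaretPairs l ++ (exposedCaretPairs r).map (· + numLeaves l) := by
  cases l with
  | leaf =>
    cases r with
    | leaf => simp at h
    | node r1 r2 => simp [exposedCaretPairs]
  | node l1 l2 =>
    cases r <;> simp [exposedCaretPairs]

lemma leaf_of_numLeaves_one : ∀ {T : BinTree}, numLeaves T = 1 → T = BinTree.leaf := by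
  intro T h
  cases T with
  | leaf => rfl
  | node l r =>
    exfalso
    have h1 := numLeaves_eq_numCarets l
    have h2 := numLeaves_eq_numCarets r
    simp only [numLeaves] at h
    omega

lemma head_expsAux_zero : ∀ {T : BinTree}, (expsAux T)[0]? = some 0 → T = BinTree.leaf := by
  intro T h
  cases T with
  | leaf => rfl
  | node l r =>
    obtain ⟨w, bs, hB⟩ := expsAux_node_head l r
    rw [hB] at h
    simp at h

lemma ecpAux_mem : ∀ (T : BinTree) (i v : ℕ),
    (expsAux T)[i]? = some (v + 1) → (expsAux T)[i + 1]? = some 0 →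
    i ∈ exposedCaretPairs T := by
  intro T
  induction T with
  | leaf =>
    intro i v h1 _
    cases i <;> simp [expsAux] at h1
  | node a b iha ihb =>
    intro i v h1 h2
    obtain ⟨a0, as, hA⟩ := expsAux_cons a
    rw [expsAux_node_eq b hA] at h1 h2
    have hlenA : as.length + 1 = numLeaves a := by
      have := length_expsAux a
      rw [hA] at this
      simpa using this
    cases i with
    | zero =>
      rw [List.getElem?_cons_succ] at h2
      cases as with
      | nil =>
        have ha : a = BinTree.leaf := leaf_of_numLeaves_one (by simp at hlenA; omega)
        simp only [List.nil_append] at h2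
        have hb : b = BinTree.leaf := head_expsAux_zero h2
        subst ha; subst hb
        simp [exposedCaretPairs]
      | cons a1 as' =>
        have hane : a ≠ BinTree.leaf := by
          intro hcon
          rw [hcon] at hA
          simp [expsAux] at hA
        have ha1 : a1 = 0 := by
          rw [List.getElem?_append_left (by simp)] at h2
          simpa using h2
        obtain ⟨w, bs, hB⟩ : ∃ w bs, expsAux a = (w + 1) :: bs := by
          cases a with
          | leaf => exact absurd rfl hane
          | node l1 l2 => exact expsAux_node_head l1 l2
        have hmem : 0 ∈ exposedCaretPairs a := by
          apply iha 0 w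
          · rw [hB]; simp
          · rw [hA]
            simp [ha1]
        rw [ecp_node (Or.inl hane)]
        exact List.mem_append_left _ hmem
    | succ i' =>
      rw [List.getElem?_cons_succ] at h1 h2
      rcases Nat.lt_or_ge i' as.length with hlt | hge
      · have hane : a ≠ BinTree.leaf := by
          intro hcon
          rw [hcon] at hlenA
          simp only [numLeaves] at hlenA
          omega
        have h1' : (expsAux a)[i' + 1]? = some (v + 1) := by
          rw [hA, List.getElem?_cons_succ]
          rw [List.getElem?_append_left hlt] at h1
          exact h1
        obtain ⟨l0, hl0⟩ := expsAux_last a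
        have hlt2 : i' + 2 < (expsAux a).length := last_entry_zero hl0 h1'
        have hlt2' : i' + 1 < as.length := by
          rw [hA] at hlt2
          simp at hlt2
          omega
        have h2' : (expsAux a)[i' + 2]? = some 0 := by
          rw [hA, List.getElem?_cons_succ]
          rw [List.getElem?_append_left hlt2'] at h2
          exact h2
        have hmem := iha (i' + 1) v h1' h2'
        rw [ecp_node (Or.inl hane)]
        exact List.mem_append_left _ hmem
      · have h1' : (expsAux b)[i' - as.length]? = some (v + 1) := by
          rw [List.getElem?_append_right hge] at h1
          exact h1
        have h2' : (expsAux b)[i' - as.length + 1]? = some 0 := by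
          rw [List.getElem?_append_right (by omega)] at h2
          rwa [show i' + 1 - as.length = i' - as.length + 1 by omega] at h2
        have hbne : b ≠ BinTree.leaf := by
          intro hcon
          rw [hcon] at h1'
          rcases hx : i' - as.length with _ | j <;> rw [hx] at h1' <;> simp [expsAux] at h1'
        have hmem := ihb (i' - as.length) v h1' h2'
        rw [ecp_node (Or.inr hbne)]
        apply List.mem_append_right
        apply List.mem_map.mpr
        exact ⟨i' - as.length, hmem, by omega⟩

lemma exps_node_eq (l r : BinTree) :
    exps (BinTree.node l r) = expsAux l ++ exps r := rfl

lemma ecp_mem : ∀ (T : BinTree) (i v : ℕ),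
    (exps T)[i]? = some (v + 1) → (exps T)[i + 1]? = some 0 →
    i ∈ exposedCaretPairs T := by
  intro T
  induction T with
  | leaf =>
    intro i v h1 _
    cases i <;> simp [exps] at h1
  | node l r _ ihr =>
    intro i v h1 h2
    rw [exps_node_eq] at h1 h2
    rcases Nat.lt_or_ge i (expsAux l).length with hlt | hge
    · have h1' : (expsAux l)[i]? = some (v + 1) := by
        rw [List.getElem?_append_left hlt] at h1
        exact h1
      obtain ⟨l0, hl0⟩ := expsAux_last l
      have hlt2 : i + 1 < (expsAux l).length := last_entry_zero hl0 h1'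
      have h2' : (expsAux l)[i + 1]? = some 0 := by
        rw [List.getElem?_append_left hlt2] at h2
        exact h2
      have hlne : l ≠ BinTree.leaf := by
        intro hcon
        rw [hcon] at h1'
        cases i <;> simp [expsAux] at h1'
      rw [ecp_node (Or.inl hlne)]
      exact List.mem_append_left _ (ecpAux_mem l i v h1' h2')
    · have h1' : (exps r)[i - (expsAux l).length]? = some (v + 1) := by
        rw [List.getElem?_append_right hge] at h1
        exact h1
      have h2' : (exps r)[i - (expsAux l).length + 1]? = some 0 := by
        rw [List.getElem?_append_right (by omega)] at h2
        rwa [show i + 1 - (expsAux l).length = i - (expsAux l).length + 1 by omega] at h2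
      have hrne : r ≠ BinTree.leaf := by
        intro hcon
        rw [hcon] at h1'
        rcases hx : i - (expsAux l).length with _ | j <;> rw [hx] at h1' <;> simp [exps] at h1'
      rw [ecp_node (Or.inr hrne)]
      apply List.mem_append_right
      apply List.mem_map.mpr
      refine ⟨i - (expsAux l).length, ihr _ v h1' h2', ?_⟩
      have hh := length_expsAux l
      omega

lemma presum : ∀ (T : BinTree) (p v : ℕ), (expsAux T)[p]? = some (v + 1) →
    p ≤ ((expsAux T).take p).sum := by
  intro T
  induction T with
  | leaf =>
    intro p v h1
    cases p <;> simp [expsAux] at h1 ⊢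
  | node a b iha ihb =>
    intro p v h1
    obtain ⟨a0, as, hA⟩ := expsAux_cons a
    rw [expsAux_node_eq b hA] at h1 ⊢
    cases p with
    | zero => simp
    | succ p' =>
      rw [List.getElem?_cons_succ] at h1
      rw [List.take_succ_cons]
      rcases Nat.lt_or_ge p' as.length with hlt | hge
      · have h1' : (expsAux a)[p' + 1]? = some (v + 1) := by
          rw [hA, List.getElem?_cons_succ]
          rw [List.getElem?_append_left hlt] at h1
          exact h1
        have hIH := iha (p' + 1) v h1'
        rw [hA, List.take_succ_cons] at hIH
        rw [List.take_append, show p' - as.length = 0 by omega, List.take_zero,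
          List.append_nil]
        simp only [List.sum_cons] at hIH ⊢
        omega
      · have h1' : (expsAux b)[p' - as.length]? = some (v + 1) := by
          rw [List.getElem?_append_right hge] at h1
          exact h1
        have hIH := ihb (p' - as.length) v h1'
        have hsa : a0 + as.sum = numCarets a := by
          have := sum_expsAux a
          rw [hA] at this
          simpa using this
        have hla : as.length + 1 = numLeaves a := by
          have := length_expsAux a
          rw [hA] at this
          simpa using this
        have hnl := numLeaves_eq_numCarets a
        rw [List.take_append]
        rw [List.take_of_length_le (by omega)]
        simp only [List.sum_cons, List.sum_append]
        omega

end TreeLemmas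

section Assemble
open BinTree

/-- the nonzero entries of a leaf-exponent list, with their positions -/
def nz (es : List ℕ) : List (ℕ × ℕ) := es.enum.filter fun p => p.2 != 0

lemma zip_fst_snd : ∀ l : List (ℕ × ℕ), (l.map Prod.fst).zip (l.map Prod.snd) = l
  | [] => rfl
  | p :: l => by simp [zip_fst_snd l]

lemma prodX_maps (l : List (ℕ × ℕ)) : prodX (l.map Prod.fst) (l.map Prod.snd) = wprod l := by
  rw [prodX_eq_wprod, zip_fst_snd]

lemma wprod_filter_nz : ∀ l : List (ℕ × ℕ),
    wprod (l.filter fun p => p.2 != 0) = (l.map fun p => x p.1 ^ p.2).prod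
  | [] => rfl
  | p :: l => by
    by_cases h : p.2 = 0
    · rw [List.filter_cons, if_neg (by simp [h]), List.map_cons, List.prod_cons, h, pow_zero,
        one_mul, wprod_filter_nz l]
    · rw [List.filter_cons, if_pos (by simpa using h), List.map_cons, List.prod_cons,
        wprod_cons, wprod_filter_nz l]

lemma posElt_eq (T : BinTree) :
    prodX ((nz (exps T)).map Prod.fst) ((nz (exps T)).map Prod.snd) = posElt T := by
  rw [prodX_maps, nz, wprod_filter_nz]
  rw [posElt, List.enum, enumFrom_eq_zipIdx, List.map_map]
  rfl

lemma pairwise_enumFrom : ∀ (es : List ℕ) (n : ℕ),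
    (List.enumFrom n es).Pairwise fun p q => p.1 < q.1
  | [], _ => List.Pairwise.nil
  | e :: es, n => by
    rw [List.enumFrom_cons, List.pairwise_cons]
    exact ⟨fun q hq => by have := List.le_fst_of_mem_enumFrom hq; omega,
      pairwise_enumFrom es (n + 1)⟩

lemma chain'_nz_fst (es : List ℕ) : List.Chain' (· < ·) ((nz es).map Prod.fst) := by
  unfold List.Chain'
  rw [List.isChain_iff_pairwise, List.pairwise_map]
  exact (pairwise_enumFrom es 0).filter _

lemma mem_nz_fst {es : List ℕ} {i : ℕ} :
    i ∈ (nz es).map Prod.fst ↔ ∃ v, es[i]? = some v ∧ v ≠ 0 := by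
  constructor
  · intro h
    obtain ⟨p, hp, rfl⟩ := List.mem_map.mp h
    obtain ⟨hmem, hnz⟩ := List.mem_filter.mp hp
    refine ⟨p.2, ?_, by simpa using hnz⟩
    rw [← List.mk_mem_enum_iff_getElem?]
    rw [← Prod.mk.eta (p := p)] at hmem
    exact hmem
  · rintro ⟨v, hv, hnz⟩
    exact List.mem_map.mpr ⟨(i, v),
      List.mem_filter.mpr ⟨List.mk_mem_enum_iff_getElem?.mpr hv, by simpa⟩, rfl⟩

lemma pos_nz_snd {es : List ℕ} : ∀ s ∈ (nz es).map Prod.snd, 0 < s := by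
  intro s hs
  obtain ⟨p, hp, rfl⟩ := List.mem_map.mp hs
  have := (List.mem_filter.mp hp).2
  simp at this
  omega

lemma okAux : ∀ (es : List ℕ) (m k : ℕ),
    (∀ p v, es[p]? = some (v + 1) → m + p < k + (es.take p).sum) →
    okl k ((List.enumFrom m es).filter fun p => p.2 != 0) := by
  intro es
  induction es with
  | nil => intro m k _; exact trivial
  | cons e es ih =>
    intro m k H
    rw [List.enumFrom_cons, List.filter_cons]
    by_cases he : e = 0
    · subst he
      rw [if_neg (by simp)]
      apply ih (m + 1) k
      intro p v hp
      have := H (p + 1) v (by simpa using hp)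
      simp only [List.take_succ_cons, List.sum_cons] at this
      omega
    · obtain ⟨v, rfl⟩ : ∃ v, e = v + 1 := ⟨e - 1, by omega⟩
      rw [if_pos (by simp)]
      refine ⟨?_, ?_⟩
      · have := H 0 v (by simp)
        simpa using this
      · apply ih (m + 1) (k + (v + 1))
        intro p w hp
        have := H (p + 1) w (by simpa using hp)
        simp only [List.take_succ_cons, List.sum_cons] at this
        omega

lemma sum_snd_filter : ∀ (es : List ℕ) (m : ℕ),
    ((((List.enumFrom m es).filter fun p => p.2 != 0)).map Prod.snd).sum = es.sum := by
  intro es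
  induction es with
  | nil => intro m; rfl
  | cons e es ih =>
    intro m
    rw [List.enumFrom_cons, List.filter_cons]
    by_cases he : e = 0
    · subst he
      rw [if_neg (by simp)]
      simp [ih (m + 1)]
    · rw [if_pos (by simpa using he)]
      simp [ih (m + 1)]

lemma set_append_len {α : Type*} (a : List α) (b : α) (c : List α) (v : α) :
    (a ++ b :: c).set a.length v = a ++ v :: c := by
  induction a with
  | nil => rfl
  | cons x a ih => simp [List.set, ih]

lemma getElem?_append_len {α : Type*} (a : List α) (b : α) (c : List α) :
    (a ++ b :: c)[a.length]? = some b := by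
  rw [List.getElem?_append_right (le_refl _)]
  simp

end Assemble

end NFU


open NFU

/-- normal form of `w x₁`. If `w` has normal form
`x_{i₁}^{r₁} ⋯ x_{i_n}^{r_n} x_{j_m}^{-s_m} ⋯ x_{j₁}^{-s₁}` and the left
subtree of the right child of the root of `T₋` is nonempty, then `w x₁` has
normal form obtained by decreasing by one the exponent `s_l` at the index
`j_l`, the smallest leaf number in the right subtree of the root of `T₋`. -/
theorem normal_form_mul_x1 (w : F) (Tm Tp : BinTree) (is rs js ss : List ℕ)
    (hred : IsReducedPair Tm Tp) (hrepr : toF Tm Tp = w)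
    (hnf : IsNF is rs js ss)
    (hw : w = prodX is rs * (prodX js ss)⁻¹)
    (hSRL : Tm.rightSubtree.leftSubtree ≠ BinTree.leaf) :
    ∃ q sq : ℕ, js[q]? = some Tm.minRightLeaf ∧ ss[q]? = some sq ∧
      w * x1 = prodX is rs * (prodX js (ss.set q (sq - 1)))⁻¹ := by
  obtain ⟨L, R0, rfl⟩ : ∃ L R0, Tm = BinTree.node L R0 := by
    cases Tm with
    | leaf => simp [BinTree.rightSubtree, BinTree.leftSubtree] at hSRL
    | node L R0 => exact ⟨L, R0, rfl⟩
  obtain ⟨RL, RR, rfl⟩ : ∃ RL RR, R0 = BinTree.node RL RR := by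
    cases R0 with
    | leaf => simp [BinTree.rightSubtree, BinTree.leftSubtree] at hSRL
    | node RL RR => exact ⟨RL, RR, rfl⟩
  have hRL : RL ≠ BinTree.leaf := by
    simpa [BinTree.rightSubtree, BinTree.leftSubtree] using hSRL
  obtain ⟨w0, bs, hB⟩ : ∃ w0 bs, BinTree.expsAux RL = (w0 + 1) :: bs := by
    cases RL with
    | leaf => exact absurd rfl hRL
    | node a b => exact expsAux_node_head a b
  have hexps : BinTree.exps (BinTree.node L (BinTree.node RL RR))
      = BinTree.expsAux L ++ ((w0 + 1) :: (bs ++ BinTree.exps RR)) := by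
    rw [exps_node_eq, exps_node_eq, hB]
    simp
  set esm := BinTree.exps (BinTree.node L (BinTree.node RL RR)) with hes
  set esp := BinTree.exps Tp with hesp
  have hnfT : IsNF ((nz esp).map Prod.fst) ((nz esp).map Prod.snd)
      ((nz esm).map Prod.fst) ((nz esm).map Prod.snd) := by
    refine ⟨by simp, by simp, chain'_nz_fst _, chain'_nz_fst _, pos_nz_snd, pos_nz_snd, ?_⟩
    intro i hi hj
    by_contra hcon
    push_neg at hcon
    obtain ⟨hc1, hc2⟩ := hcon
    obtain ⟨vp, hvp, hvpnz⟩ := mem_nz_fst.mp hi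
    obtain ⟨vm, hvm, hvmnz⟩ := mem_nz_fst.mp hj
    obtain ⟨vp', rfl⟩ : ∃ u, vp = u + 1 := ⟨vp - 1, by omega⟩
    obtain ⟨vm', rfl⟩ : ∃ u, vm = u + 1 := ⟨vm - 1, by omega⟩
    have hzp : esp[i + 1]? = some 0 := by
      obtain ⟨l0, hl0⟩ := exps_last Tp
      have hlen : i + 1 < esp.length := last_entry_zero (hesp.trans hl0) hvp
      obtain ⟨u, hu⟩ : ∃ u, esp[i + 1]? = some u := ⟨_, List.getElem?_eq_getElem hlen⟩
      have hu0 : u = 0 := by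
        by_contra hu0
        exact hc1 (mem_nz_fst.mpr ⟨u, hu, hu0⟩)
      rw [hu, hu0]
    have hzm : esm[i + 1]? = some 0 := by
      obtain ⟨l0, hl0⟩ := exps_last (BinTree.node L (BinTree.node RL RR))
      have hlen : i + 1 < esm.length := last_entry_zero (hes.trans hl0) hvm
      obtain ⟨u, hu⟩ : ∃ u, esm[i + 1]? = some u := ⟨_, List.getElem?_eq_getElem hlen⟩
      have hu0 : u = 0 := by
        by_contra hu0
        exact hc2 (mem_nz_fst.mpr ⟨u, hu, hu0⟩)
      rw [hu, hu0]
    have hecp1 : i ∈ exposedCaretPairs Tp := by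
      apply ecp_mem Tp i vp'
      · rw [← hesp]; exact hvp
      · rw [← hesp]; exact hzp
    have hecp2 : i ∈ exposedCaretPairs (BinTree.node L (BinTree.node RL RR)) := by
      apply ecp_mem _ i vm'
      · rw [← hes]; exact hvm
      · rw [← hes]; exact hzm
    exact hred.2 i ⟨hecp2, hecp1⟩
  have heltT : NFU.elt is rs js ss
      = NFU.elt ((nz esp).map Prod.fst) ((nz esp).map Prod.snd)
        ((nz esm).map Prod.fst) ((nz esm).map Prod.snd) := by
    rw [NFU.elt, NFU.elt, ← hw]
    rw [hesp, hes, posElt_eq, posElt_eq]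
    exact hrepr.symm
  obtain ⟨hiseq, hrseq, hjseq, hsseq⟩ := unq (rs.sum + ss.sum) is rs js ss _ _ _ _
    (le_refl _) hnf hnfT (congrArg phi heltT)
  set dL := (BinTree.expsAux L).length with hdL
  set F1 := (List.enumFrom 0 (BinTree.expsAux L)).filter (fun p => p.2 != 0) with hF1
  set F2 := (List.enumFrom (dL + 1) (bs ++ BinTree.exps RR)).filter (fun p => p.2 != 0)
    with hF2
  have hsplit : nz esm = F1 ++ ((dL, w0 + 1) :: F2) := by
    rw [hexps, nz, List.enum, List.enumFrom_append, List.filter_append,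
      List.enumFrom_cons, List.filter_cons, if_pos (by simp)]
    rw [hF1, hF2, hdL]
    simp [Nat.add_comm]
  have hq1 : ((nz esm).map Prod.fst)[F1.length]? = some dL := by
    have h1 : (nz esm).map Prod.fst = F1.map Prod.fst ++ dL :: F2.map Prod.fst := by
      rw [hsplit]; simp
    rw [h1, show F1.length = (F1.map Prod.fst).length by simp, getElem?_append_len]
  have hq2 : ((nz esm).map Prod.snd)[F1.length]? = some (w0 + 1) := by
    have h1 : (nz esm).map Prod.snd = F1.map Prod.snd ++ (w0 + 1) :: F2.map Prod.snd := by
      rw [hsplit]; simp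
    rw [h1, show F1.length = (F1.map Prod.snd).length by simp, getElem?_append_len]
  have hdmin : dL = BinTree.minRightLeaf (BinTree.node L (BinTree.node RL RR)) := by
    rw [hdL, length_expsAux]
    rfl
  refine ⟨F1.length, w0 + 1, ?_, ?_, ?_⟩
  · rw [hjseq, hq1, hdmin]
  · rw [hsseq, hq2]
  · rw [hw, hjseq, hsseq]
    have hok : okl 1 F1 := by
      rw [hF1]
      apply okAux
      intro p v hp
      have := presum L p v hp
      omega
    have hsum1 : dL = 1 + (F1.map Prod.snd).sum := by
      have h1 : (F1.map Prod.snd).sum = (BinTree.expsAux L).sum := by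
        rw [hF1, sum_snd_filter]
      have h2 := sum_expsAux L
      have h3 := length_expsAux L
      have h4 := numLeaves_eq_numCarets L
      omega
    have hpass0 := NFU.pass F1 1 (dL, w0 + 1) F2 hok (by simpa using hsum1) (by omega)
    rw [x_one] at hpass0
    have hpass : x1⁻¹ * wprod (F1 ++ (dL, w0 + 1) :: F2) = wprod (F1 ++ (dL, w0) :: F2) := by
      simpa using hpass0
    have hN : prodX ((nz esm).map Prod.fst) ((nz esm).map Prod.snd)
        = wprod (F1 ++ (dL, w0 + 1) :: F2) := by
      rw [prodX_maps, hsplit]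
    have hN' : prodX ((nz esm).map Prod.fst)
        ((((nz esm).map Prod.snd)).set F1.length (w0 + 1 - 1))
        = wprod (F1 ++ (dL, w0) :: F2) := by
      have e1 : (nz esm).map Prod.fst = (F1 ++ (dL, w0) :: F2).map Prod.fst := by
        rw [hsplit]; simp
      have e2 : (((nz esm).map Prod.snd)).set F1.length (w0 + 1 - 1)
          = (F1 ++ (dL, w0) :: F2).map Prod.snd := by
        rw [hsplit]
        simp only [List.map_append, List.map_cons]
        rw [show F1.length = (F1.map Prod.snd).length by simp, set_append_len]
        norm_num
      rw [e1, e2, prodX_maps]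
    rw [hN, hN']
    have hpass2 : wprod (F1 ++ (dL, w0) :: F2)
        = x1⁻¹ * wprod (F1 ++ (dL, w0 + 1) :: F2) := by
      rw [← hpass]
    rw [hpass2]
    group

end Thompson
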